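/- arXiv:1309.4033 — 7 statements merged into one kernel-verified Lean document; each statement's English description precedes it below -/
import Mathlib

section
/- If H is a graph and σ is an automorphism of H of order 2 (an involution), then for any graph G, the number of homomorphisms from G to H is congruent modulo 2 to the number of homomorphisms from G to H^σ, the subgraph of H induced by the fixed points of σ. -/
structure LoopGraph (V : Type) where
  Adj : V → V → Prop
  symm : ∀ u v, Adj u v → Adj v u

def LoopGraph.IsHom {V W : Type} (G : LoopGraph V) (H : LoopGraph W) (f : V → W) : Prop :=
  ∀ u v, G.Adj u v → H.Adj (f u) (f v)

noncomputable def homCount {V W : Type} (G : LoopGraph V) (H : LoopGraph W) : ℕ :=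
  Nat.card {f : V → W // G.IsHom H f}

def LoopGraph.IsAut {V : Type} (H : LoopGraph V) (σ : Equiv.Perm V) : Prop :=
  ∀ u v, H.Adj u v ↔ H.Adj (σ u) (σ v)

def LoopGraph.fixedSubgraph {V : Type} (H : LoopGraph V) (σ : Equiv.Perm V) :
    LoopGraph {v : V // σ v = v} :=
  ⟨fun u v => H.Adj u v, fun u v h => H.symm u v h⟩

/-- If σ is an involution (automorphism of order 2) of H, then for any graph G the
number of homomorphisms from G to H is congruent mod 2 to the number of
homomorphisms from G to the fixed-point subgraph H^σ. -/
theorem stmt0 {V : Type} [Fintype V] (H : LoopGraph V)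
    (σ : Equiv.Perm V) (hσ : H.IsAut σ) (hord : orderOf σ = 2)
    {U : Type} [Fintype U] (G : LoopGraph U) :
    homCount G H ≡ homCount G (H.fixedSubgraph σ) [MOD 2] := by
  classical
  have hσ2 : σ ^ 2 = 1 := by rw [← hord]; exact pow_orderOf_eq_one σ
  have hσσ : ∀ v, σ (σ v) = v := by
    intro v
    have : (σ ^ 2) v = v := by rw [hσ2]; rfl
    simpa [sq, Equiv.Perm.mul_apply] using this
  set α := {f : U → V // G.IsHom H f} with hα
  haveI : Fintype α := Fintype.ofFinite α
  -- the involution on homs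
  let i : Function.End α := fun x =>
    ⟨fun u => σ (x.1 u), fun u v huv => (hσ _ _).mp (x.2 u v huv)⟩
  have hi2 : i ^ 2 = 1 := by
    rw [sq]
    funext x
    show i (i x) = x
    apply Subtype.ext
    funext u
    exact hσσ _
  have hmod : Fintype.card α ≡ Fintype.card i.fixedPoints [MOD 2] := by
    have : i ^ (2 : ℕ) ^ (1 : ℕ) = 1 := by simpa using hi2
    exact Equiv.Perm.card_fixedPoints_modEq (p := 2) (n := 1) this
  -- identify fixed points with homs into the fixed subgraph
  let e : i.fixedPoints ≃ {g : U → {v : V // σ v = v} // G.IsHom (H.fixedSubgraph σ) g} :=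
    { toFun := fun x =>
        ⟨fun u => ⟨x.1.1 u, congrFun (congrArg Subtype.val x.2) u⟩,
         fun u v huv => x.1.2 u v huv⟩
      invFun := fun g =>
        ⟨⟨fun u => (g.1 u).1, fun u v huv => g.2 u v huv⟩,
         by
           show i _ = _
           apply Subtype.ext
           funext u
           exact (g.1 u).2⟩
      left_inv := fun x => by apply Subtype.ext; apply Subtype.ext; rfl
      right_inv := fun g => by apply Subtype.ext; funext u; apply Subtype.ext; rfl }
  have h1 : homCount G H = Fintype.card α := Nat.card_eq_fintype_card
  have h2 : homCount G (H.fixedSubgraph σ) = Fintype.card i.fixedPoints := by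
    rw [homCount, Nat.card_eq_fintype_card]
    exact (Fintype.card_congr e).symm
  rw [h1, h2]
  exact hmod
end

section
/- Given a graph G and a prime p, there is, up to isomorphism, exactly one graph G* such that G* has no automorphisms of order p and G reduces to G* by a sequence of steps, each replacing a graph by the fixed-point subgraph of one of its order-p automorphisms. -/
structure FGraph where
  V : Type
  fin : Fintype V
  Adj : V → V → Prop
  symm : ∀ u v, Adj u v → Adj v u

def FGraph.IsAut (H : FGraph) (σ : Equiv.Perm H.V) : Prop :=
  ∀ u v, H.Adj u v ↔ H.Adj (σ u) (σ v)

/-- The induced subgraph on the fixed points of an automorphism. -/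
noncomputable def FGraph.fixedSubgraph (H : FGraph) (σ : Equiv.Perm H.V) : FGraph where
  V := {v : H.V // σ v = v}
  fin := by classical exact @Subtype.fintype _ _ (Classical.decPred _) H.fin
  Adj := fun u v => H.Adj u v
  symm := fun u v h => H.symm u v h

/-- Isomorphism of (bundled) graphs. -/
def FGraph.Iso (G H : FGraph) : Prop :=
  ∃ e : G.V ≃ H.V, ∀ u v, G.Adj u v ↔ H.Adj (e u) (e v)

/-- One reduction step: H →_p K iff K is (isomorphic to) the fixed-point subgraph of
an order-p automorphism of H. -/
def ReduceStep (p : ℕ) (H K : FGraph) : Prop :=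
  ∃ σ : Equiv.Perm H.V, H.IsAut σ ∧ orderOf σ = p ∧ K.Iso (H.fixedSubgraph σ)

attribute [instance] FGraph.fin

open Equiv Subgroup

namespace FGraph

theorem iso_refl (G : FGraph) : G.Iso G := ⟨Equiv.refl _, fun _ _ => Iff.rfl⟩

theorem Iso.symm {G H : FGraph} (h : G.Iso H) : H.Iso G := by
  obtain ⟨e, he⟩ := h
  refine ⟨e.symm, fun u v => ?_⟩
  have := he (e.symm u) (e.symm v)
  simpa using this.symm

theorem Iso.trans {G H K : FGraph} (h1 : G.Iso H) (h2 : H.Iso K) : G.Iso K := by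
  obtain ⟨e, he⟩ := h1; obtain ⟨f, hf⟩ := h2
  exact ⟨e.trans f, fun u v => (he u v).trans (hf _ _)⟩

/-- The automorphism group as a subgroup of permutations. -/
def aut (G : FGraph) : Subgroup (Equiv.Perm G.V) where
  carrier := {σ | G.IsAut σ}
  one_mem' := fun _ _ => Iff.rfl
  mul_mem' := fun ha hb u v => (hb u v).trans (ha _ _)
  inv_mem' := fun {σ} h u v => by
    have := (h (σ⁻¹ u) (σ⁻¹ v)).symm
    simpa using this

@[simp] theorem mem_aut {G : FGraph} {σ : Equiv.Perm G.V} : σ ∈ G.aut ↔ G.IsAut σ := Iff.rfl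

/-- Induced subgraph on common fixed points of a set of permutations. -/
noncomputable def fixGrp (G : FGraph) (S : Subgroup (Equiv.Perm G.V)) : FGraph where
  V := {v : G.V // ∀ σ ∈ S, σ v = v}
  fin := @Subtype.fintype _ _ (Classical.decPred _) G.fin
  Adj := fun u v => G.Adj u v
  symm := fun u v h => G.symm _ _ h

/-- Equivalence of subtypes with definitional coercion. -/
def predEquiv {α : Type*} {p q : α → Prop} (h : ∀ a, p a ↔ q a) : {a // p a} ≃ {a // q a} :=
  ⟨fun x => ⟨x.1, (h _).1 x.2⟩, fun x => ⟨x.1, (h _).2 x.2⟩, fun _ => rfl, fun _ => rfl⟩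

theorem fixGrp_zpowers_iso (G : FGraph) (σ : Equiv.Perm G.V) :
    (G.fixGrp (zpowers σ)).Iso (G.fixedSubgraph σ) := by
  refine ⟨predEquiv fun v => ?_, fun u v => Iff.rfl⟩
  constructor
  · exact fun h => h σ (mem_zpowers σ)
  · intro h τ hτ
    obtain ⟨k, rfl⟩ := mem_zpowers_iff.mp hτ
    exact Function.IsFixedPt.perm_zpow h k

theorem fixGrp_bot_iso (G : FGraph) : (G.fixGrp ⊥).Iso G := by
  refine ⟨⟨fun v => v.1, fun v => ⟨v, ?_⟩, fun v => rfl, fun v => rfl⟩, fun u v => Iff.rfl⟩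
  intro σ hσ
  rw [Subgroup.mem_bot] at hσ
  subst hσ; rfl

theorem fixGrp_congr (G : FGraph) {S T : Subgroup (Equiv.Perm G.V)} (h : S = T) :
    (G.fixGrp S).Iso (G.fixGrp T) := by subst h; exact iso_refl _

section Restrict

variable (G : FGraph) (S N : Subgroup (Equiv.Perm G.V))

theorem map_mem_fix (hnorm : ∀ n ∈ N, ∀ s ∈ S, n⁻¹ * s * n ∈ S) {n : Equiv.Perm G.V} (hn : n ∈ N) {v : G.V}
    (hv : ∀ σ ∈ S, σ v = v) : ∀ σ ∈ S, σ (n v) = n v := by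
  intro s hs
  have h2 := hv _ (hnorm n hn s hs)
  calc s (n v) = n ((n⁻¹ * s * n) v) := by
        simp [Equiv.Perm.mul_apply]
    _ = n v := by rw [h2]

/-- Restriction of permutations in `N` to the fixed points of `S`. -/
noncomputable def restrictHom (hnorm : ∀ n ∈ N, ∀ s ∈ S, n⁻¹ * s * n ∈ S) : ↥N →* Equiv.Perm ((G.fixGrp S).V) :=
  MonoidHom.mk'
    (fun n => ⟨fun v => ⟨n.1 v.1, map_mem_fix G S N hnorm n.2 v.2⟩,
      fun v => ⟨(n⁻¹ : ↥N).1 v.1, map_mem_fix G S N hnorm (n⁻¹ : ↥N).2 v.2⟩,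
      fun v => Subtype.ext (by simp), fun v => Subtype.ext (by simp)⟩)
    (fun a b => Equiv.ext fun v => Subtype.ext rfl)

noncomputable def rrange (hnorm : ∀ n ∈ N, ∀ s ∈ S, n⁻¹ * s * n ∈ S) : Subgroup (Equiv.Perm ((G.fixGrp S).V)) :=
  (restrictHom G S N hnorm).range

theorem rrange_pgroup (hnorm : ∀ n ∈ N, ∀ s ∈ S, n⁻¹ * s * n ∈ S) {p : ℕ} (hpg : IsPGroup p ↥N) : IsPGroup p ↥(rrange G S N hnorm) :=
  hpg.of_surjective (restrictHom G S N hnorm).rangeRestrict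
    (restrictHom G S N hnorm).rangeRestrict_surjective

theorem rrange_auts (hnorm : ∀ n ∈ N, ∀ s ∈ S, n⁻¹ * s * n ∈ S) (hauts : ∀ n ∈ N, G.IsAut n) :
    ∀ π ∈ rrange G S N hnorm, (G.fixGrp S).IsAut π := by
  rintro π ⟨n, rfl⟩
  intro u v
  exact hauts n.1 n.2 u.1 v.1

theorem fixGrp_rrange_iso (hnorm : ∀ n ∈ N, ∀ s ∈ S, n⁻¹ * s * n ∈ S) (hSN : S ≤ N) :
    ((G.fixGrp S).fixGrp (rrange G S N hnorm)).Iso (G.fixGrp N) := by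
  refine ⟨⟨fun w => ⟨w.1.1, fun n hn => ?_⟩,
    fun v => ⟨⟨v.1, fun s hs => v.2 s (hSN hs)⟩, ?_⟩, fun w => rfl, fun v => rfl⟩,
    fun u v => Iff.rfl⟩
  · have := w.2 (restrictHom G S N hnorm ⟨n, hn⟩) ⟨⟨n, hn⟩, rfl⟩
    exact congrArg Subtype.val this
  · rintro π ⟨n, rfl⟩
    exact Subtype.ext (v.2 n.1 n.2)

end Restrict


/-- `Equiv.permCongr` as a multiplicative equivalence. -/
def permCongrMul {α β : Type*} (e : α ≃ β) : Equiv.Perm α ≃* Equiv.Perm β :=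
  { e.permCongr with
    map_mul' := fun a b => Equiv.ext fun x => by
      simp [Equiv.permCongr_apply, Equiv.Perm.mul_apply] }

@[simp] theorem permCongrMul_apply {α β : Type*} (e : α ≃ β) (σ : Equiv.Perm α) (x : β) :
    permCongrMul e σ x = e (σ (e.symm x)) := rfl

theorem orderOf_permCongrMul {α β : Type*} (e : α ≃ β) (σ : Equiv.Perm α) :
    orderOf (permCongrMul e σ) = orderOf σ :=
  orderOf_injective (permCongrMul e).toMonoidHom (permCongrMul e).injective σ

/-- Transfer an automorphism along a graph isomorphism. -/
theorem aut_transfer {G G' : FGraph} (h : G.Iso G') (σ' : Equiv.Perm G'.V)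
    (ha : G'.IsAut σ') :
    ∃ σ : Equiv.Perm G.V, G.IsAut σ ∧ orderOf σ = orderOf σ' ∧
      (G.fixedSubgraph σ).Iso (G'.fixedSubgraph σ') := by
  obtain ⟨e, he⟩ := h
  refine ⟨permCongrMul e.symm σ', ?_, orderOf_permCongrMul e.symm σ', ?_⟩
  · intro u v
    have h1 := he u v
    have h2 := ha (e u) (e v)
    have h3 := he (e.symm (σ' (e u))) (e.symm (σ' (e v)))
    simp only [Equiv.apply_symm_apply] at h3
    have := (h1.trans h2).trans h3.symm
    simpa using this
  · refine ⟨Equiv.subtypeEquiv e fun v => ?_, fun u v => ?_⟩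
    · show permCongrMul e.symm σ' v = v ↔ σ' (e v) = e v
      simp only [permCongrMul_apply, Equiv.symm_symm]
      constructor
      · intro hh
        conv_rhs => rw [← hh]
        simp
      · intro hh; rw [hh]; simp
    · show G.Adj u.1 v.1 ↔ G'.Adj (e u.1) (e v.1)
      exact he u.1 v.1

theorem reduceStep_of_iso {p : ℕ} {G G' K : FGraph} (h : G.Iso G')
    (hs : ReduceStep p G' K) : ReduceStep p G K := by
  obtain ⟨σ', ha, ho, hK⟩ := hs
  obtain ⟨σ, h1, h2, h3⟩ := aut_transfer h σ' ha
  exact ⟨σ, h1, h2.trans ho, hK.trans h3.symm⟩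

theorem hasOrderP_of_iso {p : ℕ} {G G' : FGraph} (h : G.Iso G')
    (hx : ∃ σ : Equiv.Perm G'.V, G'.IsAut σ ∧ orderOf σ = p) :
    ∃ σ : Equiv.Perm G.V, G.IsAut σ ∧ orderOf σ = p := by
  obtain ⟨σ', ha, ho⟩ := hx
  obtain ⟨σ, h1, h2, _⟩ := aut_transfer h σ' ha
  exact ⟨σ, h1, h2.trans ho⟩

/-- `G` reaches `K` up to isomorphism. -/
def Reaches (p : ℕ) (G K : FGraph) : Prop :=
  ∃ K', Relation.ReflTransGen (ReduceStep p) G K' ∧ K'.Iso K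

theorem reaches_of_iso {p : ℕ} {G K : FGraph} (h : G.Iso K) : Reaches p G K :=
  ⟨G, Relation.ReflTransGen.refl, h⟩

theorem Reaches.iso_right {p : ℕ} {G K L : FGraph} (h : Reaches p G K) (h2 : K.Iso L) :
    Reaches p G L := by
  obtain ⟨K', c, i⟩ := h
  exact ⟨K', c, i.trans h2⟩

theorem chain_iso_left {p : ℕ} {G G' L : FGraph} (h : G.Iso G')
    (hc : Relation.ReflTransGen (ReduceStep p) G' L) : Reaches p G L := by
  rcases Relation.ReflTransGen.cases_head hc with rfl | ⟨M, hstep, hrest⟩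
  · exact ⟨G, Relation.ReflTransGen.refl, h⟩
  · exact ⟨L, Relation.ReflTransGen.head (reduceStep_of_iso h hstep) hrest, iso_refl L⟩

theorem Reaches.iso_left {p : ℕ} {G G' K : FGraph} (h : G.Iso G') (hr : Reaches p G' K) :
    Reaches p G K := by
  obtain ⟨K', c, i⟩ := hr
  exact (chain_iso_left h c).iso_right i

theorem Reaches.trans {p : ℕ} {G K L : FGraph} (h1 : Reaches p G K) (h2 : Reaches p K L) :
    Reaches p G L := by
  obtain ⟨K', c1, i1⟩ := h1
  obtain ⟨L'', c2, i2⟩ := Reaches.iso_left i1 h2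
  exact ⟨L'', c1.trans c2, i2⟩


theorem reach_fixGrp_strong {p : ℕ} (hp : p.Prime) :
    ∀ n (G : FGraph), Nat.card G.V ≤ n → ∀ S : Subgroup (Equiv.Perm G.V),
      (∀ σ ∈ S, G.IsAut σ) → IsPGroup p ↥S → S ≠ ⊥ →
      ∀ K : FGraph, K.Iso (G.fixGrp S) → Relation.ReflTransGen (ReduceStep p) G K := by
  intro n
  induction n with
  | zero =>
    intro G hcard S hauts hpg hne K hiso
    exfalso
    apply hne
    have hE : IsEmpty G.V := by
      by_contra h
      rw [not_isEmpty_iff] at h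
      have : 0 < Nat.card G.V := Nat.card_pos
      omega
    refine (Subgroup.eq_bot_iff_forall S).mpr fun σ hσ => ?_
    ext x
    exact (hE.false x).elim
  | succ n IH =>
    intro G hcard S hauts hpg hne K hiso
    haveI := Fact.mk hp
    letI : DecidableEq G.V := Classical.decEq _
    letI : Fintype ↥S := Fintype.ofFinite _
    haveI : Nontrivial ↥S := (Subgroup.nontrivial_iff_ne_bot S).mpr hne
    -- central element of order p
    obtain ⟨z, hz⟩ : ∃ z : ↥(Subgroup.center ↥S), orderOf z = p := by
      apply exists_prime_orderOf_dvd_card p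
      have hpg' : IsPGroup p ↥(Subgroup.center ↥S) := hpg.to_subgroup _
      haveI : Nontrivial ↥(Subgroup.center ↥S) := hpg.center_nontrivial
      obtain ⟨k, hk⟩ := IsPGroup.iff_card.mp hpg'
      rcases k with _ | k
      · exfalso
        have h1 : 1 < Nat.card ↥(Subgroup.center ↥S) :=
          Finite.one_lt_card_iff_nontrivial.mpr inferInstance
        rw [hk, pow_zero] at h1
        exact lt_irrefl _ h1
      · rw [← Nat.card_eq_fintype_card, hk]
        exact dvd_pow_self p (Nat.succ_ne_zero k)
    set σS : ↥S := (z : ↥S) with hσSdef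
    have hordS : orderOf σS = p := by
      rw [← hz]
      exact orderOf_injective (Subgroup.center ↥S).subtype Subtype.coe_injective z
    set σ : Equiv.Perm G.V := (σS : Equiv.Perm G.V) with hσdef
    have hσS : σ ∈ S := σS.2
    have hord : orderOf σ = p := by
      rw [← hordS]
      exact orderOf_injective S.subtype Subtype.coe_injective σS
    have hcomm : ∀ τ ∈ S, τ * σ = σ * τ := by
      intro τ hτ
      have hzc := z.2
      rw [Subgroup.mem_center_iff] at hzc
      exact congrArg Subtype.val (hzc ⟨τ, hτ⟩)
    have hσ1 : σ ≠ 1 := by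
      intro h
      rw [h, orderOf_one] at hord
      exact hp.ne_one hord.symm
    have hσaut : G.IsAut σ := hauts σ hσS
    have hnorm : ∀ nn ∈ S, ∀ s ∈ zpowers σ, nn⁻¹ * s * nn ∈ zpowers σ := by
      intro nn hnn s hs
      obtain ⟨k, rfl⟩ := mem_zpowers_iff.mp hs
      have hc : Commute nn σ := hcomm nn hnn
      have hck : nn * σ ^ k = σ ^ k * nn := (hc.zpow_right k).eq
      have : nn⁻¹ * σ ^ k * nn = σ ^ k := by
        rw [mul_assoc, ← hck, ← mul_assoc, inv_mul_cancel, one_mul]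
      rw [this]
      exact zpow_mem (mem_zpowers σ) k
    have hzb : zpowers σ ≤ S := zpowers_le.mpr hσS
    set R := rrange G (zpowers σ) S hnorm with hRdef
    have hRaut : ∀ π ∈ R, (G.fixGrp (zpowers σ)).IsAut π :=
      rrange_auts G (zpowers σ) S hnorm (fun nn hnn => hauts nn hnn)
    have hRpg : IsPGroup p ↥R := rrange_pgroup G (zpowers σ) S hnorm hpg
    have hfix_iso : ((G.fixGrp (zpowers σ)).fixGrp R).Iso (G.fixGrp S) :=
      fixGrp_rrange_iso G (zpowers σ) S hnorm hzb
    have hstep_target : (G.fixGrp (zpowers σ)).Iso (G.fixedSubgraph σ) :=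
      fixGrp_zpowers_iso G σ
    have hcard1 : Nat.card (G.fixGrp (zpowers σ)).V < Nat.card G.V := by
      obtain ⟨v, hv⟩ : ∃ v, σ v ≠ v := by
        by_contra h
        push_neg at h
        exact hσ1 (Equiv.ext h)
      letI : DecidablePred (fun v : G.V => ∀ τ ∈ zpowers σ, τ v = v) := Classical.decPred _
      have := Fintype.card_subtype_lt (p := fun v : G.V => ∀ τ ∈ zpowers σ, τ v = v)
        (x := v) (fun hall => hv (hall σ (mem_zpowers σ)))
      show Nat.card {v : G.V // ∀ τ ∈ zpowers σ, τ v = v} < Nat.card G.V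
      rw [Nat.card_eq_fintype_card, Nat.card_eq_fintype_card]
      convert this using 2
    by_cases hRbot : R = ⊥
    · have hiso2 : (G.fixGrp S).Iso (G.fixGrp (zpowers σ)) := by
        have h1 : ((G.fixGrp (zpowers σ)).fixGrp R).Iso (G.fixGrp (zpowers σ)) := by
          rw [hRbot]
          exact fixGrp_bot_iso _
        exact hfix_iso.symm.trans h1
      exact Relation.ReflTransGen.single
        ⟨σ, hσaut, hord, hiso.trans (hiso2.trans hstep_target)⟩
    · refine Relation.ReflTransGen.head ⟨σ, hσaut, hord, hstep_target⟩ ?_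
      exact IH (G.fixGrp (zpowers σ)) (by omega) R hRaut hRpg hRbot K
        (hiso.trans hfix_iso.symm)

theorem reaches_fixGrp {p : ℕ} (hp : p.Prime) (G : FGraph) (S : Subgroup (Equiv.Perm G.V))
    (hauts : ∀ σ ∈ S, G.IsAut σ) (hpg : IsPGroup p ↥S) : Reaches p G (G.fixGrp S) := by
  by_cases h : S = ⊥
  · subst h
    exact reaches_of_iso (fixGrp_bot_iso G).symm
  · exact ⟨G.fixGrp S,
      reach_fixGrp_strong hp (Nat.card G.V) G le_rfl S hauts hpg h _ (iso_refl _),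
      iso_refl _⟩


theorem subgroup_card_lt {α : Type*} [Group α] [Finite α] {R N : Subgroup α} (h : R < N) :
    Nat.card ↥R < Nat.card ↥N := by
  have hss : (R : Set α) ⊂ (N : Set α) := by
    rw [Set.ssubset_iff_subset_ne]
    exact ⟨SetLike.coe_subset_coe.mpr h.le, fun he => h.ne (SetLike.coe_injective he)⟩
  have := Set.ncard_lt_ncard hss (Set.toFinite _)
  rwa [← Nat.card_coe_set_eq, ← Nat.card_coe_set_eq] at this

theorem reaches_fix_le {p : ℕ} (hp : p.Prime) (G : FGraph) (S : Subgroup (Equiv.Perm G.V))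
    (hauts : ∀ σ ∈ S, G.IsAut σ) (hpg : IsPGroup p ↥S) :
    ∀ k (R : Subgroup (Equiv.Perm G.V)), R ≤ S → Nat.card ↥S - Nat.card ↥R ≤ k →
      Reaches p (G.fixGrp R) (G.fixGrp S) := by
  haveI := Fact.mk hp
  letI : DecidableEq G.V := Classical.decEq _
  intro k
  induction k with
  | zero =>
    intro R hRS hc
    -- card S ≤ card R forces R = S
    have hle : Nat.card ↥R ≤ Nat.card ↥S := Subgroup.card_le_of_le hRS
    have : R = S := by
      by_contra hne
      have := subgroup_card_lt (lt_of_le_of_ne hRS hne)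
      omega
    subst this
    exact reaches_of_iso (iso_refl _)
  | succ k IHk =>
    intro R hRS hc
    by_cases hRS' : R = S
    · subst hRS'
      exact reaches_of_iso (iso_refl _)
    have hnil : Group.IsNilpotent ↥S := hpg.isNilpotent
    have hnc : NormalizerCondition ↥S := normalizerCondition_of_isNilpotent
    set H' := R.subgroupOf S with hH'def
    have hH'top : H' ≠ ⊤ := fun h =>
      hRS' (le_antisymm hRS (Subgroup.subgroupOf_eq_top.mp h))
    have hlt : H' < Subgroup.normalizer (H' : Set ↥S) := hnc H' (lt_top_iff_ne_top.mpr hH'top)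
    set N : Subgroup (Equiv.Perm G.V) := (Subgroup.normalizer (H' : Set ↥S)).map S.subtype with hNdef
    have hRN : R ≤ N := by
      intro r hr
      exact ⟨⟨r, hRS hr⟩, hlt.le (Subgroup.mem_subgroupOf.mpr hr), rfl⟩
    have hNS : N ≤ S := Subgroup.map_subtype_le _
    have hRneN : R ≠ N := by
      obtain ⟨x, hxN, hxR⟩ := SetLike.exists_of_lt hlt
      intro h
      apply hxR
      have hx : (x : Equiv.Perm G.V) ∈ N := ⟨x, hxN, rfl⟩
      rw [← h] at hx
      exact Subgroup.mem_subgroupOf.mpr hx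
    have hnorm : ∀ nn ∈ N, ∀ s ∈ R, nn⁻¹ * s * nn ∈ R := by
      rintro nn ⟨x, hx0, rfl⟩ s hs
      have hx : ∀ h : ↥S, h ∈ H' ↔ x * h * x⁻¹ ∈ H' := Subgroup.mem_normalizer_iff.mp hx0
      have hsS : s ∈ S := hRS hs
      have h2 : x⁻¹ * ⟨s, hsS⟩ * x ∈ H' := by
        refine (hx _).mpr ?_
        have : x * (x⁻¹ * ⟨s, hsS⟩ * x) * x⁻¹ = ⟨s, hsS⟩ := by group
        rw [this]
        exact Subgroup.mem_subgroupOf.mpr hs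
      have h3 := Subgroup.mem_subgroupOf.mp h2
      simpa using h3
    have hauN : ∀ nm ∈ N, G.IsAut nm := fun nm h => hauts nm (hNS h)
    have hpgN : IsPGroup p ↥N := hpg.to_le hNS
    set Rb := rrange G R N hnorm with hRbdef
    have step1 : Reaches p (G.fixGrp R) ((G.fixGrp R).fixGrp Rb) :=
      reaches_fixGrp hp (G.fixGrp R) Rb
        (rrange_auts G R N hnorm hauN) (rrange_pgroup G R N hnorm hpgN)
    have step1' : Reaches p (G.fixGrp R) (G.fixGrp N) :=
      step1.iso_right (fixGrp_rrange_iso G R N hnorm hRN)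
    have hcN : Nat.card ↥S - Nat.card ↥N ≤ k := by
      have hlt2 : Nat.card ↥R < Nat.card ↥N :=
        subgroup_card_lt (lt_of_le_of_ne hRN hRneN)
      have hle2 : Nat.card ↥N ≤ Nat.card ↥S := Subgroup.card_le_of_le hNS
      omega
    exact step1'.trans (IHk N hNS hcN)


theorem card_subtype_lt_of_not {α : Type*} [Fintype α] {P : α → Prop} (x : α) (hx : ¬ P x) :
    Nat.card {v // P v} < Nat.card α := by
  classical
  rw [Nat.card_eq_fintype_card, Nat.card_eq_fintype_card]
  exact Fintype.card_subtype_lt hx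

theorem sylow_fix_iso {p : ℕ} [Fact p.Prime] (G : FGraph) (P Q : Sylow p ↥G.aut) :
    (G.fixGrp ((P : Subgroup ↥G.aut).map G.aut.subtype)).Iso
      (G.fixGrp ((Q : Subgroup ↥G.aut).map G.aut.subtype)) := by
  haveI : Finite (Subgroup ↥G.aut) :=
    Finite.of_injective _ (SetLike.coe_injective (A := Subgroup ↥G.aut))
  haveI : Finite (Sylow p ↥G.aut) :=
    Finite.of_injective (fun P : Sylow p ↥G.aut => (P : Subgroup ↥G.aut))
      (fun a b h => Sylow.ext h)
  obtain ⟨g, hg⟩ := MulAction.exists_smul_eq ↥G.aut P Q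
  have hconj : ∀ x : ↥G.aut, x ∈ (Q : Subgroup ↥G.aut) ↔
      g⁻¹ * x * g ∈ (P : Subgroup ↥G.aut) := by
    intro x
    rw [← hg]
    show x ∈ ((g • P : Sylow p ↥G.aut) : Subgroup ↥G.aut) ↔ _
    rw [Sylow.smul_def, Sylow.pointwise_smul_def,
      Subgroup.mem_pointwise_smul_iff_inv_smul_mem]
    simp [MulAut.smul_def, MulAut.conj_inv_apply]
  set P' := (P : Subgroup ↥G.aut).map G.aut.subtype with hP'def
  set Q' := (Q : Subgroup ↥G.aut).map G.aut.subtype with hQ'def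
  have hconj' : ∀ τ : Equiv.Perm G.V, τ ∈ Q' ↔
      (g : Equiv.Perm G.V)⁻¹ * τ * (g : Equiv.Perm G.V) ∈ P' := by
    intro τ
    constructor
    · rintro ⟨x, hx, rfl⟩
      exact ⟨g⁻¹ * x * g, (hconj x).mp hx, rfl⟩
    · rintro ⟨y, hy, hyeq⟩
      refine ⟨g * y * g⁻¹, (hconj _).mpr ?_, ?_⟩
      · have h9 : g⁻¹ * (g * y * g⁻¹) * g = y := by group
        rw [h9]; exact hy
      · show ((g * y * g⁻¹ : ↥G.aut) : Equiv.Perm G.V) = τ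
        have h8 : ((g * y * g⁻¹ : ↥G.aut) : Equiv.Perm G.V) =
            (g : Equiv.Perm G.V) * (y : Equiv.Perm G.V) * (g : Equiv.Perm G.V)⁻¹ := rfl
        rw [h8, show (y : Equiv.Perm G.V) = (g : Equiv.Perm G.V)⁻¹ * τ * (g : Equiv.Perm G.V) from hyeq]
        group
  refine ⟨Equiv.subtypeEquiv (g : Equiv.Perm G.V) fun v => ?_, fun u v => ?_⟩
  · constructor
    · intro hv τ hτ
      have h5 := hv _ ((hconj' τ).mp hτ)
      have h6 : τ ((g : Equiv.Perm G.V) v) =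
          (g : Equiv.Perm G.V) (((g : Equiv.Perm G.V)⁻¹ * τ * (g : Equiv.Perm G.V)) v) := by
        simp [Equiv.Perm.mul_apply]
      rw [h6, h5]
    · intro hv s hs
      have hgsg : (g : Equiv.Perm G.V) * s * (g : Equiv.Perm G.V)⁻¹ ∈ Q' := by
        rw [hconj']
        have h9 : (g : Equiv.Perm G.V)⁻¹ *
            ((g : Equiv.Perm G.V) * s * (g : Equiv.Perm G.V)⁻¹) * (g : Equiv.Perm G.V) = s := by
          group
        rw [h9]; exact hs
      have h6 := hv _ hgsg
      have h7 : (g : Equiv.Perm G.V) (s v) = (g : Equiv.Perm G.V) v := by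
        have h10 : ((g : Equiv.Perm G.V) * s * (g : Equiv.Perm G.V)⁻¹)
            ((g : Equiv.Perm G.V) v) = (g : Equiv.Perm G.V) (s v) := by
          simp [Equiv.Perm.mul_apply]
        rw [← h10, h6]
      exact (g : Equiv.Perm G.V).injective h7
  · show G.Adj u.1 v.1 ↔ G.Adj ((g : Equiv.Perm G.V) u.1) ((g : Equiv.Perm G.V) v.1)
    exact g.2 u.1 v.1


theorem irred_case {p : ℕ} (G : FGraph)
    (hred : ¬∃ σ : Equiv.Perm G.V, G.IsAut σ ∧ orderOf σ = p) :
    ∃ K : FGraph,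
      Relation.ReflTransGen (ReduceStep p) G K ∧
      (¬∃ σ : Equiv.Perm K.V, K.IsAut σ ∧ orderOf σ = p) ∧
      ∀ K' : FGraph, Relation.ReflTransGen (ReduceStep p) G K' →
        (¬∃ σ : Equiv.Perm K'.V, K'.IsAut σ ∧ orderOf σ = p) → K.Iso K' := by
  refine ⟨G, Relation.ReflTransGen.refl, hred, ?_⟩
  intro K' hchain _
  rcases Relation.ReflTransGen.cases_head hchain with rfl | ⟨M, hstep, _⟩
  · exact iso_refl G
  · exact absurd ⟨hstep.choose, hstep.choose_spec.1, hstep.choose_spec.2.1⟩ hred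

theorem main {p : ℕ} (hp : p.Prime) : ∀ n (G : FGraph), Nat.card G.V ≤ n →
    ∃ K : FGraph,
      Relation.ReflTransGen (ReduceStep p) G K ∧
      (¬∃ σ : Equiv.Perm K.V, K.IsAut σ ∧ orderOf σ = p) ∧
      ∀ K' : FGraph, Relation.ReflTransGen (ReduceStep p) G K' →
        (¬∃ σ : Equiv.Perm K'.V, K'.IsAut σ ∧ orderOf σ = p) → K.Iso K' := by
  haveI := Fact.mk hp
  intro n
  induction n with
  | zero =>
    intro G hc
    apply irred_case
    rintro ⟨σ, -, hord⟩
    have hE : IsEmpty G.V := by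
      by_contra h
      rw [not_isEmpty_iff] at h
      have : 0 < Nat.card G.V := Nat.card_pos
      omega
    have hσ1 : σ = 1 := by
      ext x
      exact (hE.false x).elim
    rw [hσ1, orderOf_one] at hord
    exact hp.ne_one hord.symm
  | succ n IH =>
    intro G hc
    by_cases hred : ∃ σ : Equiv.Perm G.V, G.IsAut σ ∧ orderOf σ = p
    swap
    · exact irred_case G hred
    obtain ⟨σ, hσaut, hσord⟩ := hred
    set A := G.aut with hAdef
    set σA : ↥A := ⟨σ, hσaut⟩ with hσAdef
    have hcoeord : ∀ x : ↥A, orderOf (x : Equiv.Perm G.V) = orderOf x :=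
      fun x => orderOf_injective A.subtype Subtype.coe_injective x
    have hordA : orderOf σA = p := by rw [← hcoeord σA]; exact hσord
    have hpz : IsPGroup p ↥(zpowers σA) :=
      IsPGroup.of_card (by rw [Nat.card_zpowers, hordA, pow_one])
    obtain ⟨P, hPle⟩ := hpz.exists_le_sylow
    set P' : Subgroup (Equiv.Perm G.V) := (P : Subgroup ↥A).map A.subtype with hP'def
    have hσP' : σ ∈ P' := ⟨σA, hPle (mem_zpowers σA), rfl⟩
    have hP'auts : ∀ τ ∈ P', G.IsAut τ := by rintro τ ⟨y, hy, rfl⟩; exact y.2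
    have hP'pg : IsPGroup p ↥P' := P.isPGroup'.map A.subtype
    have hσ1 : σ ≠ 1 := by
      intro h
      rw [h, orderOf_one] at hσord
      exact hp.ne_one hσord.symm
    obtain ⟨v0, hv0⟩ : ∃ v, σ v ≠ v := by
      by_contra h
      push_neg at h
      exact hσ1 (Equiv.ext h)
    have hcard1 : Nat.card (G.fixGrp P').V < Nat.card G.V :=
      card_subtype_lt_of_not v0 (fun hall => hv0 (hall σ hσP'))
    obtain ⟨K, hKchain, hKred, hKuniq⟩ := IH (G.fixGrp P') (by omega)
    have hP'ne : P' ≠ ⊥ := by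
      intro h
      rw [h] at hσP'
      exact hσ1 (Subgroup.mem_bot.mp hσP')
    have hGtoFix : Relation.ReflTransGen (ReduceStep p) G (G.fixGrp P') :=
      reach_fixGrp_strong hp (Nat.card G.V) G le_rfl P' hP'auts hP'pg hP'ne _ (iso_refl _)
    refine ⟨K, hGtoFix.trans hKchain, hKred, ?_⟩
    intro K' hchain' hK'red
    rcases Relation.ReflTransGen.cases_head hchain' with rfl | ⟨M, hstep, hrest⟩
    · exact absurd ⟨σ, hσaut, hσord⟩ hK'red
    obtain ⟨τ, hτaut, hτord, hMiso⟩ := hstep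
    set τA : ↥A := ⟨τ, hτaut⟩ with hτAdef
    have hordτA : orderOf τA = p := by rw [← hcoeord τA]; exact hτord
    have hpzτ : IsPGroup p ↥(zpowers τA) :=
      IsPGroup.of_card (by rw [Nat.card_zpowers, hordτA, pow_one])
    obtain ⟨Q, hQle⟩ := hpzτ.exists_le_sylow
    set Q' : Subgroup (Equiv.Perm G.V) := (Q : Subgroup ↥A).map A.subtype with hQ'def
    have hτQ' : τ ∈ Q' := ⟨τA, hQle (mem_zpowers τA), rfl⟩
    have hQ'auts : ∀ ν ∈ Q', G.IsAut ν := by rintro ν ⟨y, hy, rfl⟩; exact y.2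
    have hQ'pg : IsPGroup p ↥Q' := Q.isPGroup'.map A.subtype
    have h1 : Reaches p (G.fixedSubgraph τ) (G.fixGrp Q') := by
      refine Reaches.iso_left (fixGrp_zpowers_iso G τ).symm ?_
      exact reaches_fix_le hp G Q' hQ'auts hQ'pg
        (Nat.card ↥Q' - Nat.card ↥(zpowers τ)) (zpowers τ) (zpowers_le.mpr hτQ') le_rfl
    have h2 : Reaches p M (G.fixGrp Q') := Reaches.iso_left hMiso h1
    have h3 : (G.fixGrp Q').Iso (G.fixGrp P') := sylow_fix_iso G Q P
    have h4 : Reaches p M K := (h2.iso_right h3).trans ⟨K, hKchain, iso_refl K⟩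
    have hcardM : Nat.card M.V ≤ n := by
      obtain ⟨e, -⟩ := hMiso
      have he : Nat.card M.V = Nat.card (G.fixedSubgraph τ).V := Nat.card_congr e
      obtain ⟨w0, hw0⟩ : ∃ v, τ v ≠ v := by
        by_contra h
        push_neg at h
        apply hp.ne_one
        have : τ = 1 := Equiv.ext h
        rw [this, orderOf_one] at hτord
        exact hτord.symm
      have hlt : Nat.card (G.fixedSubgraph τ).V < Nat.card G.V :=
        card_subtype_lt_of_not w0 hw0
      omega
    obtain ⟨KM, hMchain, hMred, hMuniq⟩ := IH M hcardM
    obtain ⟨K'', hK''chain, hK''iso⟩ := h4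
    have hK''red : ¬∃ σ : Equiv.Perm K''.V, K''.IsAut σ ∧ orderOf σ = p :=
      fun hx => hKred (hasOrderP_of_iso hK''iso.symm hx)
    have i1 : KM.Iso K'' := hMuniq K'' hK''chain hK''red
    have i2 : KM.Iso K' := hMuniq K' hrest hK'red
    exact ((i1.trans hK''iso).symm).trans i2

end FGraph

/-- Every graph has, up to isomorphism, exactly one reduced form with respect to
reduction by automorphisms of prime order p. -/
theorem stmt6 (p : ℕ) (hp : p.Prime) (G : FGraph) :
    ∃ K : FGraph,
      Relation.ReflTransGen (ReduceStep p) G K ∧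
      (¬∃ σ : Equiv.Perm K.V, K.IsAut σ ∧ orderOf σ = p) ∧
      ∀ K' : FGraph,
        Relation.ReflTransGen (ReduceStep p) G K' →
        (¬∃ σ : Equiv.Perm K'.V, K'.IsAut σ ∧ orderOf σ = p) →
        K.Iso K' := by
  exact FGraph.main hp (Nat.card G.V) G le_rfl
end

section
/- Let S be a set of vectors in GF(2)^n containing the all-ones vector, such that for any two indices i ≠ j there is a vector in S whose i-th and j-th coordinates differ. Then the closure of S under coordinate-wise addition and coordinate-wise multiplication contains every standard basis vector e_1,...,e_n. -/
/-- Closure of a set of vectors in GF(2)^n under coordinate-wise addition and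
coordinate-wise multiplication. -/
inductive Closure {n : ℕ} (S : Set (Fin n → ZMod 2)) : (Fin n → ZMod 2) → Prop
  | base {v : Fin n → ZMod 2} : v ∈ S → Closure S v
  | add {u v : Fin n → ZMod 2} : Closure S u → Closure S v → Closure S (u + v)
  | mul {u v : Fin n → ZMod 2} : Closure S u → Closure S v → Closure S (u * v)

lemma closure_prod {n : ℕ} (S : Set (Fin n → ZMod 2))
    (hones : (fun _ => 1) ∈ S)
    (t : Finset (Fin n)) (w : Fin n → (Fin n → ZMod 2))
    (hw : ∀ j ∈ t, Closure S (w j)) :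
    Closure S (∏ j ∈ t, w j) := by
  induction t using Finset.induction with
  | empty =>
      simp only [Finset.prod_empty]
      have : (1 : Fin n → ZMod 2) = fun _ => 1 := rfl
      rw [this]
      exact Closure.base hones
  | insert _ _ hj ih =>
      rw [Finset.prod_insert hj]
      exact Closure.mul (hw _ (Finset.mem_insert_self _ _))
        (ih fun j hjt => hw j (Finset.mem_insert_of_mem hjt))

/-- If S contains the all-ones vector and separates every pair of coordinates, then
the closure of S under coordinate-wise addition and multiplication contains every
standard basis vector. -/
theorem stmt10 {n : ℕ} (S : Set (Fin n → ZMod 2))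
    (hones : (fun _ => 1) ∈ S)
    (hsep : ∀ i j : Fin n, i ≠ j → ∃ v ∈ S, v i ≠ v j)
    (i : Fin n) :
    Closure S (Pi.single i 1) := by
  have key : ∀ j : Fin n, ∃ w, Closure S w ∧ w i = 1 ∧ (j ≠ i → w j = 0) := by
    intro j
    by_cases hji : j = i
    · exact ⟨fun _ => 1, Closure.base hones, rfl, fun h => absurd hji h⟩
    · obtain ⟨v, hvS, hv⟩ := hsep i j (fun h => hji h.symm)
      by_cases hvi : v i = 1
      · refine ⟨v, Closure.base hvS, hvi, fun _ => ?_⟩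
        have h : ∀ a b : ZMod 2, a ≠ b → a = 1 → b = 0 := by decide
        exact h _ _ hv hvi
      · refine ⟨v + fun _ => 1, Closure.add (Closure.base hvS) (Closure.base hones),
          ?_, fun _ => ?_⟩
        · show v i + 1 = 1
          have h : ∀ a : ZMod 2, a ≠ 1 → a + 1 = 1 := by decide
          exact h _ hvi
        · show v j + 1 = 0
          have h : ∀ a b : ZMod 2, a ≠ b → a ≠ 1 → b + 1 = 0 := by decide
          exact h _ _ hv hvi
  choose w hw1 hw2 hw3 using key
  have heq : Pi.single i 1 = ∏ j ∈ Finset.univ.erase i, w j := by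
    funext k
    rw [Finset.prod_apply]
    by_cases hk : k = i
    · subst hk
      rw [Pi.single_eq_same]
      exact (Finset.prod_eq_one fun j hj => hw2 j).symm
    · rw [Pi.single_eq_of_ne hk]
      exact (Finset.prod_eq_zero (f := fun c => w c k) (Finset.mem_erase.2 ⟨hk, Finset.mem_univ k⟩)
        (hw3 k hk)).symm
  rw [heq]
  exact closure_prod S hones _ _ fun j _ => hw1 j
end

section
/- Every involution-free tree on more than one vertex has two (distinct) vertices of degree 2 each adjacent to a leaf. -/
/-- A permutation of the vertices is an automorphism of the simple graph G. -/
def IsGraphAut {V : Type} (G : SimpleGraph V) (σ : Equiv.Perm V) : Prop :=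
  ∀ u v, G.Adj u v ↔ G.Adj (σ u) (σ v)

private lemma getVert_ne_start {V : Type} {G : SimpleGraph V} {u v : V} {p : G.Walk u v}
    (hp : p.IsPath) {i : ℕ} (h1 : 1 ≤ i) (h2 : i ≤ p.length) : p.getVert i ≠ u := by
  cases p with
  | nil => simp at h2; omega
  | cons h q =>
    obtain ⟨j, rfl⟩ : ∃ j, i = j + 1 := ⟨i - 1, by omega⟩
    rw [SimpleGraph.Walk.getVert_cons_succ]
    have hq : q.getVert j ∈ q.support :=
      SimpleGraph.Walk.mem_support_iff_exists_getVert.mpr ⟨j, rfl, by simpa using h2⟩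
    have hh := (SimpleGraph.Walk.cons_isPath_iff _ _).mp hp
    intro he
    exact hh.2 (he ▸ hq)

private lemma getVert_ne_getVert_one {V : Type} {G : SimpleGraph V} {u v : V} {p : G.Walk u v}
    (hp : p.IsPath) {i : ℕ} (h1 : 2 ≤ i) (h2 : i ≤ p.length) : p.getVert i ≠ p.getVert 1 := by
  cases p with
  | nil => simp at h2; omega
  | cons h q =>
    obtain ⟨j, rfl⟩ : ∃ j, i = j + 1 := ⟨i - 1, by omega⟩
    rw [SimpleGraph.Walk.getVert_cons_succ, SimpleGraph.Walk.getVert_cons_succ,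
      SimpleGraph.Walk.getVert_zero]
    exact getVert_ne_start hp.of_cons (by omega) (by simpa using h2)

private lemma swap_aut {V : Type} [DecidableEq V] {G : SimpleGraph V} {u w c : V}
    (hne : u ≠ w) (huc : G.Adj u c) (hwc : G.Adj w c)
    (hu : ∀ x, G.Adj u x → x = c) (hw : ∀ x, G.Adj w x → x = c) :
    ∃ σ : Equiv.Perm V, IsGraphAut G σ ∧ orderOf σ = 2 := by
  have hcu : c ≠ u := huc.ne'
  have hcw : c ≠ w := hwc.ne'
  refine ⟨Equiv.swap u w, ?_, ?_⟩
  · have fwd : ∀ a b, G.Adj a b → G.Adj (Equiv.swap u w a) (Equiv.swap u w b) := by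
      intro a b hab
      rcases eq_or_ne a u with rfl | hau
      · have hb := hu _ hab; subst hb
        rw [Equiv.swap_apply_of_ne_of_ne hcu hcw, Equiv.swap_apply_left]
        exact hwc
      rcases eq_or_ne a w with rfl | haw
      · have hb := hw _ hab; subst hb
        rw [Equiv.swap_apply_of_ne_of_ne hcu hcw, Equiv.swap_apply_right]
        exact huc
      rcases eq_or_ne b u with rfl | hbu
      · have ha := hu _ hab.symm; subst ha
        rw [Equiv.swap_apply_of_ne_of_ne hcu hcw, Equiv.swap_apply_left]
        exact hwc.symm
      rcases eq_or_ne b w with rfl | hbw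
      · have ha := hw _ hab.symm; subst ha
        rw [Equiv.swap_apply_of_ne_of_ne hcu hcw, Equiv.swap_apply_right]
        exact huc.symm
      rwa [Equiv.swap_apply_of_ne_of_ne hau haw, Equiv.swap_apply_of_ne_of_ne hbu hbw]
    intro a b
    constructor
    · exact fwd a b
    · intro h
      have := fwd _ _ h
      simpa using this
  · refine orderOf_eq_prime ?_ (by simpa [Equiv.swap_eq_one_iff] using hne)
    rw [sq]
    exact Equiv.swap_mul_self u w

private lemma chord {V : Type} [DecidableEq V] {G : SimpleGraph V} (htree : G.IsTree) {u v x : V}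
    {p : G.Walk u v} (hp : p.IsPath) (hadj : G.Adj u x) (hx : x ∈ p.support) :
    p.getVert 1 = x := by
  have hq : (p.takeUntil x hx).IsPath := hp.takeUntil hx
  have hr : (SimpleGraph.Walk.cons hadj SimpleGraph.Walk.nil : G.Walk u x).IsPath := by
    simp [hadj.ne]
  have heq : p.takeUntil x hx = SimpleGraph.Walk.cons hadj SimpleGraph.Walk.nil :=
    ((htree.existsUnique_path u x).unique hq hr)
  have hspec := p.take_spec hx
  have hlen : (p.takeUntil x hx).length = 1 := by rw [heq]; rfl
  conv_lhs => rw [← hspec]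
  rw [SimpleGraph.Walk.getVert_append, hlen]
  simp

/-- An involution-free tree on more than one vertex has two distinct vertices of
degree 2, each adjacent to a leaf. -/
theorem stmt11 {V : Type} [Fintype V] [DecidableEq V] (G : SimpleGraph V)
    [DecidableRel G.Adj] (htree : G.IsTree) (hcard : 1 < Fintype.card V)
    (hinv : ¬∃ σ : Equiv.Perm V, IsGraphAut G σ ∧ orderOf σ = 2) :
    ∃ u v : V, u ≠ v ∧ G.degree u = 2 ∧ G.degree v = 2 ∧
      (∃ l, G.Adj u l ∧ G.degree l = 1) ∧ (∃ l, G.Adj v l ∧ G.degree l = 1) := by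
  classical
  set P : ℕ → Prop := fun n => ∃ (a b : V) (p : G.Walk a b), p.IsPath ∧ p.length = n with hPdef
  have hPbound : ∀ m, P m → m ≤ Fintype.card V := by
    rintro m ⟨a, b, p, hp, rfl⟩
    have h1 : p.support.length = p.length + 1 := p.length_support
    have h2 : p.support.length ≤ Fintype.card V := hp.support_nodup.length_le_card
    omega
  -- a witness path of length ≥ 1
  obtain ⟨a₀, b₀, hab₀⟩ := Fintype.exists_pair_of_one_lt_card hcard
  obtain ⟨w₀⟩ := htree.isConnected.preconnected a₀ b₀
  have hwit : P (w₀.toPath : G.Walk a₀ b₀).length := ⟨a₀, b₀, _, w₀.toPath.2, rfl⟩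
  have hwit1 : 1 ≤ (w₀.toPath : G.Walk a₀ b₀).length := by
    by_contra h
    have h0 : (w₀.toPath : G.Walk a₀ b₀).length = 0 := by omega
    exact hab₀ (SimpleGraph.Walk.eq_of_length_eq_zero h0)
  set n := Nat.findGreatest P (Fintype.card V) with hndef
  have hPn : P n := Nat.findGreatest_spec (hPbound _ hwit) hwit
  have hmax : ∀ m, P m → m ≤ n := fun m hm => Nat.le_findGreatest (hPbound m hm) hm
  have hn1 : 1 ≤ n := le_trans hwit1 (hmax _ hwit)
  -- every endpoint of a maximum-length path has a unique neighbor, namely getVert 1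
  have leaf : ∀ (a b : V) (p : G.Walk a b), p.IsPath → p.length = n →
      ∀ x, G.Adj a x → x = p.getVert 1 := by
    intro a b p hp hlen x hx
    by_cases hxs : x ∈ p.support
    · exact (chord htree hp hx hxs).symm
    · exfalso
      have hp' : (SimpleGraph.Walk.cons hx.symm p).IsPath := by
        rw [SimpleGraph.Walk.cons_isPath_iff]; exact ⟨hp, hxs⟩
      have hPm : P (n + 1) := ⟨x, b, _, hp', by simp [hlen]⟩
      have := hmax _ hPm
      omega
  have adj1 : ∀ (a b : V) (p : G.Walk a b), p.length = n → G.Adj a (p.getVert 1) := by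
    intro a b p hlen
    have := p.adj_getVert_succ (i := 0) (by omega)
    simpa using this
  have deg1 : ∀ (a b : V) (p : G.Walk a b), p.IsPath → p.length = n → G.degree a = 1 := by
    intro a b p hp hlen
    have hnb : G.neighborFinset a = {p.getVert 1} := by
      ext x
      simp only [SimpleGraph.mem_neighborFinset, Finset.mem_singleton]
      constructor
      · exact leaf a b p hp hlen x
      · rintro rfl; exact adj1 a b p hlen
    rw [← SimpleGraph.card_neighborFinset_eq_degree, hnb, Finset.card_singleton]
  obtain ⟨a, b, p, hp, hlen⟩ := hPn
  rcases eq_or_lt_of_le hn1 with h1 | h2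
  · -- n = 1 : the tree is a single edge, swap is an involution
    exfalso
    apply hinv
    have hab : G.Adj a (p.getVert 1) := adj1 a b p hlen
    set c := p.getVert 1 with hcdef
    have hall : ∀ x : V, x = a ∨ x = c := by
      intro x
      rcases eq_or_ne x a with rfl | hxa
      · exact Or.inl rfl
      obtain ⟨w⟩ := htree.isConnected.preconnected a x
      set q := (w.toPath : G.Walk a x) with hq
      have hq1 : q.length ≤ n := hmax _ ⟨a, x, q, w.toPath.2, rfl⟩
      have hq0 : q.length ≠ 0 := fun h => hxa (SimpleGraph.Walk.eq_of_length_eq_zero h).symm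
      have hqn : q.length = n := by omega
      have : G.Adj a x := by
        have := adj1 a x q hqn
        have hx : x = q.getVert q.length := (q.getVert_length).symm
        rw [hqn, ← h1] at hx
        rwa [← hx] at this
      exact Or.inr (leaf a b p hp hlen x this)
    refine ⟨Equiv.swap a c, ?_, ?_⟩
    · have fwd : ∀ x y, G.Adj x y → G.Adj (Equiv.swap a c x) (Equiv.swap a c y) := by
        intro x y hxy
        rcases hall x with rfl | rfl <;> rcases hall y with rfl | rfl
        · exact absurd rfl hxy.ne
        · simpa using hxy.symm
        · simpa using hxy.symm
        · exact absurd rfl hxy.ne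
      intro x y
      exact ⟨fwd x y, fun h => by simpa using fwd _ _ h⟩
    · refine orderOf_eq_prime ?_ (by simpa [Equiv.swap_eq_one_iff] using hab.ne)
      rw [sq]
      exact Equiv.swap_mul_self a c
  · -- 2 ≤ n
    have deg2 : ∀ (a b : V) (p : G.Walk a b), p.IsPath → p.length = n →
        G.degree (p.getVert 1) = 2 := by
      intro a b p hp hlen
      cases p with
      | nil => simp at hlen; omega
      | @cons _ m _ h q =>
        rw [SimpleGraph.Walk.getVert_cons_succ, SimpleGraph.Walk.getVert_zero]
        have hq : q.IsPath := hp.of_cons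
        have hnotin : a ∉ q.support := ((SimpleGraph.Walk.cons_isPath_iff _ _).mp hp).2
        have hqlen : q.length + 1 = n := by simpa using hlen
        have hmc : G.Adj m (q.getVert 1) := by
          have := q.adj_getVert_succ (i := 0) (by omega)
          simpa using this
        have hac : a ≠ q.getVert 1 := by
          have := getVert_ne_start (p := SimpleGraph.Walk.cons h q) hp (i := 2)
            (by omega) (by simp; omega)
          rw [SimpleGraph.Walk.getVert_cons_succ] at this
          exact this.symm
        have hnb : G.neighborFinset m = {a, q.getVert 1} := by
          ext x
          simp only [SimpleGraph.mem_neighborFinset, Finset.mem_insert, Finset.mem_singleton]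
          constructor
          · intro hx
            by_contra hne
            push_neg at hne
            obtain ⟨hxa, hxc⟩ := hne
            by_cases hxs : x ∈ q.support
            · exact hxc (chord htree hq hx hxs).symm
            · have hp' : (SimpleGraph.Walk.cons hx.symm q).IsPath := by
                rw [SimpleGraph.Walk.cons_isPath_iff]; exact ⟨hq, hxs⟩
              have hlen' : (SimpleGraph.Walk.cons hx.symm q).length = n := by
                simp [hqlen]
              have hleafx : ∀ y, G.Adj x y → y = m := by
                intro y hy
                have := leaf x b _ hp' hlen' y hy
                rwa [SimpleGraph.Walk.getVert_cons_succ, SimpleGraph.Walk.getVert_zero] at this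
              have hleafa : ∀ y, G.Adj a y → y = m := by
                intro y hy
                have := leaf a b _ hp hlen y hy
                rwa [SimpleGraph.Walk.getVert_cons_succ, SimpleGraph.Walk.getVert_zero] at this
              exact hinv (swap_aut (Ne.symm hxa) h hx.symm hleafa hleafx)
          · rintro (rfl | rfl)
            · exact h.symm
            · exact hmc
        rw [← SimpleGraph.card_neighborFinset_eq_degree, hnb, Finset.card_pair hac]
    -- assemble
    have hlenrev : p.reverse.length = n := by simpa using hlen
    have hrev : p.reverse.IsPath := hp.reverse
    refine ⟨p.getVert 1, p.reverse.getVert 1, ?_, deg2 a b p hp hlen,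
      deg2 b a p.reverse hrev hlenrev,
      ⟨a, (adj1 a b p hlen).symm, deg1 a b p hp hlen⟩,
      ⟨b, (adj1 b a p.reverse hlenrev).symm, deg1 b a p.reverse hrev hlenrev⟩⟩
    have hgr : p.reverse.getVert 1 = p.getVert (n - 1) := by
      rw [SimpleGraph.Walk.getVert_reverse, hlen]
    rcases eq_or_lt_of_le (show 2 ≤ n from h2) with h2' | h3
    · -- n = 2 : middle vertex with two leaves, contradiction
      exfalso
      apply hinv
      have hab' : a ≠ b := by
        have := getVert_ne_start hp (i := n) (by omega) (le_of_eq hlen.symm)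
        rw [hlen.symm] at this
        rw [SimpleGraph.Walk.getVert_length] at this
        exact this.symm
      have hu : ∀ y, G.Adj a y → y = p.getVert 1 := leaf a b p hp hlen
      have hw : ∀ y, G.Adj b y → y = p.getVert 1 := by
        intro y hy
        have := leaf b a p.reverse hrev hlenrev y hy
        rw [hgr, ← h2'] at this
        simpa using this
      exact swap_aut hab' (adj1 a b p hlen) (by
        have := adj1 b a p.reverse hlenrev
        rwa [hgr, ← h2'] at this) hu hw
    · -- n ≥ 3 : the two degree-2 vertices are distinct
      rw [hgr]
      intro heq
      exact getVert_ne_getVert_one hp (i := n - 1) (by omega) (by rw [hlen]; omega) heq.symm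
end

section
/- In a tree, if a longest path has vertices p_0, p_1, ..., p_ℓ with ℓ ≥ 3 and the vertex p_1 has degree greater than 2, then the tree has an involution (namely, swapping p_0 with another leaf neighbour of p_1). -/
/-- In an acyclic graph, if `y` is adjacent to the start of a path and lies on the path,
then it is the second vertex of the path. -/
lemma aux_getVert_one {V : Type} [DecidableEq V] {G : SimpleGraph V} (hac : G.IsAcyclic)
    {c d y : V} (q : G.Walk c d) (hq : q.IsPath) (hmem : y ∈ q.support)
    (hadj : G.Adj c y) : q.getVert 1 = y := by
  have ht : (q.takeUntil y hmem).IsPath := hq.takeUntil hmem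
  have huniq : (⟨q.takeUntil y hmem, ht⟩ : G.Path c y) = SimpleGraph.Path.singleton hadj :=
    hac.path_unique _ _
  have hlen1 : (q.takeUntil y hmem).length = 1 := by
    have := congrArg (fun r : G.Path c y => r.1.length) huniq
    simpa [SimpleGraph.Path.singleton] using this
  have hspec := q.take_spec hmem
  calc q.getVert 1 = ((q.takeUntil y hmem).append (q.dropUntil y hmem)).getVert 1 := by
        rw [hspec]
    _ = y := by
        rw [SimpleGraph.Walk.getVert_append]
        simp [hlen1]

/-- The start of a longest path in an acyclic graph has a unique neighbour: the second
vertex of the path. -/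
lemma aux_leaf {V : Type} [DecidableEq V] {G : SimpleGraph V} (hac : G.IsAcyclic)
    {c d : V} (q : G.Walk c d) (hq : q.IsPath)
    (hmax : ∀ (e f : V) (r : G.Walk e f), r.IsPath → r.length ≤ q.length)
    {y : V} (hadj : G.Adj c y) : y = q.getVert 1 := by
  by_cases hmem : y ∈ q.support
  · exact (aux_getVert_one hac q hq hmem hadj).symm
  · exfalso
    have hr : (SimpleGraph.Walk.cons hadj.symm q).IsPath := hq.cons hmem
    have := hmax _ _ _ hr
    simp [SimpleGraph.Walk.length_cons] at this

/-- If in a tree a longest path p_0, ..., p_ℓ has ℓ ≥ 3 and p_1 has degree greater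
than 2, then the tree has an involution. -/
theorem stmt12 {V : Type} [Fintype V] [DecidableEq V] (G : SimpleGraph V)
    [DecidableRel G.Adj] (htree : G.IsTree) {a b : V} (p : G.Walk a b)
    (hp : p.IsPath)
    (hlong : ∀ (c d : V) (q : G.Walk c d), q.IsPath → q.length ≤ p.length)
    (hlen : 3 ≤ p.length) (hdeg : 2 < G.degree (p.getVert 1)) :
    ∃ σ : Equiv.Perm V, IsGraphAut G σ ∧ orderOf σ = 2 := by
  classical
  have hac := htree.IsAcyclic
  set p1 := p.getVert 1 with hp1
  have hnn : ¬ p.Nil := by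
    rw [SimpleGraph.Walk.not_nil_iff_lt_length]; omega
  have hadj01 : G.Adj a p1 := SimpleGraph.Walk.adj_snd hnn
  have hadj12 : G.Adj p1 (p.getVert 2) := p.adj_getVert_succ (by omega)
  -- find a third neighbour of p1
  have hsub : ¬ (G.neighborFinset p1 ⊆ {a, p.getVert 2}) := by
    intro h
    have := Finset.card_le_card h
    have h2 : ({a, p.getVert 2} : Finset V).card ≤ 2 := Finset.card_insert_le _ _ |>.trans (by simp)
    rw [SimpleGraph.card_neighborFinset_eq_degree] at this
    omega
  obtain ⟨x, hxmem, hxpair⟩ := Finset.not_subset.mp hsub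
  have hxadj : G.Adj p1 x := by rwa [SimpleGraph.mem_neighborFinset] at hxmem
  have hxa : x ≠ a := fun h => hxpair (by simp [h])
  have hx2 : x ≠ p.getVert 2 := fun h => hxpair (by simp [h])
  have hxp1 : x ≠ p1 := hxadj.ne'
  -- the tail of p
  have htail : p.tail.IsPath := hp.tail
  have htlen : p.tail.length + 1 = p.length := SimpleGraph.Walk.length_tail_add_one hnn
  have hxt : x ∉ p.tail.support := by
    intro hmem
    have := aux_getVert_one hac p.tail htail hmem hxadj
    rw [SimpleGraph.Walk.getVert_tail p] at this
    exact hx2 this.symm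
  -- the other longest path, starting at x
  set q : G.Walk x b := SimpleGraph.Walk.cons hxadj.symm p.tail with hqdef
  have hqpath : q.IsPath := htail.cons hxt
  have hqlen : q.length = p.length := by
    rw [hqdef, SimpleGraph.Walk.length_cons, htlen]
  have hq1 : q.getVert 1 = p1 := by
    rw [hqdef, SimpleGraph.Walk.getVert_cons_succ, SimpleGraph.Walk.getVert_zero]
  -- a and x are leaves with unique neighbour p1
  have Na : ∀ y, G.Adj a y → y = p1 :=
    fun y hy => aux_leaf hac p hp hlong hy
  have Nx : ∀ y, G.Adj x y → y = p1 := by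
    intro y hy
    have := aux_leaf hac q hqpath (fun e f r hr => (hlong e f r hr).trans_eq hqlen.symm) hy
    rwa [hq1] at this
  have hap1 : a ≠ p1 := hadj01.ne
  set σ := Equiv.swap a x with hσ
  have hfix : σ p1 = p1 := Equiv.swap_apply_of_ne_of_ne hap1.symm (Ne.symm hxp1)
  have key : ∀ u v, G.Adj u v → G.Adj (σ u) (σ v) := by
    intro u v huv
    rcases eq_or_ne u a with rfl | hua
    · have hv := Na v huv; subst hv
      rw [hfix, hσ, Equiv.swap_apply_left]
      exact hxadj.symm
    rcases eq_or_ne u x with rfl | hux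
    · have hv := Nx v huv; subst hv
      rw [hfix, hσ, Equiv.swap_apply_right]
      exact hadj01
    have hu : σ u = u := Equiv.swap_apply_of_ne_of_ne hua hux
    rcases eq_or_ne v a with rfl | hva
    · have hu' := Na u huv.symm; subst hu'
      rw [hfix, hσ, Equiv.swap_apply_left]
      exact hxadj
    rcases eq_or_ne v x with rfl | hvx
    · have hu' := Nx u huv.symm; subst hu'
      rw [hfix, hσ, Equiv.swap_apply_right]
      exact hadj01.symm
    have hv : σ v = v := Equiv.swap_apply_of_ne_of_ne hva hvx
    rwa [hu, hv]
  refine ⟨σ, ?_, ?_⟩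
  · intro u v
    constructor
    · exact key u v
    · intro h
      have := key _ _ h
      simpa [hσ] using this
  · refine orderOf_eq_prime ?_ ?_
    · rw [sq, hσ, Equiv.swap_mul_self]
    · rw [hσ, Ne, Equiv.swap_eq_one_iff]
      exact fun h => hxa h.symm
end

section
/- An involution-free tree has trivial automorphism group. -/
open SimpleGraph

theorem Equiv.Perm.apply_inv_self {α : Type*} (f : Equiv.Perm α) (x : α) : f (f⁻¹ x) = x := by
  simp only [Equiv.Perm.coe_inv, Equiv.apply_symm_apply]

theorem Equiv.Perm.inv_apply_self {α : Type*} (f : Equiv.Perm α) (x : α) : f⁻¹ (f x) = x := by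
  simp only [Equiv.Perm.coe_inv, Equiv.symm_apply_apply]

section TreeAux

variable {V : Type} {G : SimpleGraph V}

/-- The unique path between two vertices of a tree. -/
noncomputable def tP (ht : G.IsTree) (a b : V) : G.Walk a b :=
  (ht.existsUnique_path a b).choose

lemma tP_isPath (ht : G.IsTree) (a b : V) : (tP ht a b).IsPath :=
  (ht.existsUnique_path a b).choose_spec.1

lemma tP_unique (ht : G.IsTree) {a b : V} {p : G.Walk a b} (hp : p.IsPath) :
    p = tP ht a b :=
  (ht.existsUnique_path a b).choose_spec.2 p hp

/-- Next vertex from `a` on the way to `b`. -/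
noncomputable def tnxt (ht : G.IsTree) (a b : V) : V := (tP ht a b).getVert 1

lemma tnxt_adj (ht : G.IsTree) {a b : V} (hab : a ≠ b) : G.Adj a (tnxt ht a b) :=
  SimpleGraph.Walk.adj_snd (SimpleGraph.Walk.not_nil_of_ne hab)

lemma tP_tail (ht : G.IsTree) {a b : V} (hab : a ≠ b) :
    (tP ht a b).tail = tP ht (tnxt ht a b) b :=
  tP_unique ht ((tP_isPath ht a b).tail)

lemma not_mem_tP_tnxt (ht : G.IsTree) {a b : V} (hab : a ≠ b) :
    a ∉ (tP ht (tnxt ht a b) b).support := by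
  have hn : ¬ (tP ht a b).Nil := SimpleGraph.Walk.not_nil_of_ne hab
  have hp := tP_isPath ht a b
  rw [← SimpleGraph.Walk.cons_tail_eq _ hn, SimpleGraph.Walk.cons_isPath_iff] at hp
  rw [← tP_tail ht hab]
  exact hp.2

lemma tnxt_of_adj (ht : G.IsTree) {a b : V} (h : G.Adj a b) : tnxt ht a b = b := by
  have hp : (SimpleGraph.Walk.cons h SimpleGraph.Walk.nil).IsPath := by
    apply SimpleGraph.Walk.IsPath.cons SimpleGraph.Walk.IsPath.nil
    simp [h.ne]
  have := tP_unique ht hp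
  unfold tnxt
  rw [← this]
  simp [SimpleGraph.Walk.getVert_cons_succ]

lemma getVert_map {G' : SimpleGraph V} (f : G →g G') {a b : V} (p : G.Walk a b) (i : ℕ) :
    (p.map f).getVert i = f (p.getVert i) := by
  induction p generalizing i with
  | nil => rfl
  | cons h q ih =>
    cases i with
    | zero => rfl
    | succ n => simpa [SimpleGraph.Walk.getVert_cons_succ] using ih n

lemma tnxt_map (ht : G.IsTree) {σ : Equiv.Perm V} (haut : IsGraphAut G σ) (a b : V) :
    tnxt ht (σ a) (σ b) = σ (tnxt ht a b) := by
  let f : G →g G := ⟨σ, fun h => (haut _ _).mp h⟩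
  have hmap : ((tP ht a b).map f).IsPath :=
    SimpleGraph.Walk.map_isPath_of_injective σ.injective (tP_isPath ht a b)
  have : (tP ht a b).map f = tP ht (σ a) (σ b) := tP_unique ht hmap
  unfold tnxt
  rw [← this, getVert_map]
  rfl

lemma getVert_one_mem_support {a b : V} (p : G.Walk a b) : p.getVert 1 ∈ p.support := by
  rcases Nat.lt_or_ge p.length 1 with h | h
  · rw [SimpleGraph.Walk.getVert_of_length_le _ (by omega)]
    exact p.end_mem_support
  · exact SimpleGraph.Walk.mem_support_iff_exists_getVert.mpr ⟨1, rfl, h⟩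

lemma getVert_one_concat {a b c : V} (p : G.Walk a b) (h : G.Adj b c) (hab : a ≠ b) :
    (p.concat h).getVert 1 = p.getVert 1 := by
  have hl : 0 < p.length :=
    SimpleGraph.Walk.not_nil_iff_lt_length.mp (SimpleGraph.Walk.not_nil_of_ne hab)
  rw [SimpleGraph.Walk.concat_eq_append, SimpleGraph.Walk.getVert_append]
  by_cases h1 : 1 < p.length
  · simp [h1]
  · have hlen : p.length = 1 := by omega
    have : p.getVert 1 = b := by rw [← hlen]; exact p.getVert_length
    simp [h1, hlen, this]

lemma concat_isPath {a b c : V} {p : G.Walk a b} (hp : p.IsPath) (h : G.Adj b c)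
    (hc : c ∉ p.support) : (p.concat h).IsPath := by
  rw [← SimpleGraph.Walk.isPath_reverse_iff, SimpleGraph.Walk.reverse_concat]
  exact SimpleGraph.Walk.IsPath.cons hp.reverse
    (by simpa [SimpleGraph.Walk.support_reverse] using hc)

/-- Two adjacent vertices, both distinct from `v`, have the same next vertex from `v`. -/
lemma tnxt_adj_eq (ht : G.IsTree) {v x y : V} (hx : x ≠ v) (hy : y ≠ v) (hxy : G.Adj x y) :
    tnxt ht v x = tnxt ht v y := by
  classical
  have hvx : v ≠ x := hx.symm
  by_cases hmem : y ∈ (tP ht v x).support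
  · -- y on the path from v to x
    have hmem' : y ∈ (tP ht (tnxt ht v x) x).support := by
      have h1 := (tP ht v x).support_eq_cons
      rw [← tP_tail ht hvx]
      have h2 := SimpleGraph.Walk.support_tail_of_not_nil (tP ht v x)
        (SimpleGraph.Walk.not_nil_of_ne hvx)
      erw [h2]
      rw [h1] at hmem
      rcases List.mem_cons.mp hmem with h | h
      · exact absurd h hy
      · exact h
    set t := (tP ht (tnxt ht v x) x).takeUntil y hmem' with hdef
    have htp : t.IsPath := (tP_isPath ht _ _).takeUntil hmem'
    have hvnott : v ∉ t.support := fun hmm =>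
      not_mem_tP_tnxt ht hvx (SimpleGraph.Walk.support_takeUntil_subset _ hmem' hmm)
    have hcons : (SimpleGraph.Walk.cons (tnxt_adj ht hvx) t).IsPath :=
      SimpleGraph.Walk.IsPath.cons htp hvnott
    have := tP_unique ht hcons
    unfold tnxt
    rw [← this, SimpleGraph.Walk.getVert_cons_succ, SimpleGraph.Walk.getVert_zero]
    rfl
  · -- extend the path from v to x by the edge x-y
    have hq : ((tP ht v x).concat hxy).IsPath := concat_isPath (tP_isPath ht v x) hxy hmem
    have := tP_unique ht hq
    unfold tnxt
    rw [← this, getVert_one_concat _ _ hvx]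

/-- Crossing lemma: if `c` lies in the branch of `z` at `y` and `d` lies in the branch of
`y` at `z`, and `c, d` are adjacent, then `c = z` and `d = y`. -/
lemma tcross (ht : G.IsTree) {y z c d : V} (hc : c ≠ y) (hd : d ≠ z)
    (h1 : tnxt ht y c = z) (h2 : tnxt ht z d = y) (hcd : G.Adj c d) :
    c = z ∧ d = y := by
  classical
  by_cases hcz : c = z
  · subst hcz
    have : tnxt ht c d = d := tnxt_of_adj ht hcd
    exact ⟨rfl, by rw [← h2, this]⟩
  · exfalso
    have hyn : y ∉ (tP ht z c).support := by
      have := not_mem_tP_tnxt ht hc.symm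
      rwa [h1] at this
    by_cases hds : d ∈ (tP ht z c).support
    · set t := (tP ht z c).takeUntil d hds with hdef
      have htp : t.IsPath := (tP_isPath ht _ _).takeUntil hds
      have : t = tP ht z d := tP_unique ht htp
      have hyt : y ∈ t.support := by
        rw [this]
        have : (tP ht z d).getVert 1 ∈ (tP ht z d).support := getVert_one_mem_support _
        rwa [show (tP ht z d).getVert 1 = tnxt ht z d from rfl, h2] at this
      exact hyn (SimpleGraph.Walk.support_takeUntil_subset _ hds hyt)
    · have hq : ((tP ht z c).concat hcd).IsPath := concat_isPath (tP_isPath ht z c) hcd hds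
      have heqq : (tP ht z c).concat hcd = tP ht z d := tP_unique ht hq
      have hy1 : ((tP ht z c).concat hcd).getVert 1 = y := by
        rw [heqq]; exact h2
      rw [getVert_one_concat _ _ (fun h => hcz h.symm)] at hy1
      exact hyn (by rw [← hy1]; exact getVert_one_mem_support _)

/-- Walk along a non-backtracking sequence. -/
def walkSeg (f : ℕ → V) (hadj : ∀ i, G.Adj (f i) (f (i + 1))) :
    ∀ (j d : ℕ), G.Walk (f (j + d)) (f j)
  | _, 0 => SimpleGraph.Walk.nil
  | j, d + 1 => SimpleGraph.Walk.cons ((hadj (j + d)).symm) (walkSeg f hadj j d)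

lemma walkSeg_support (f : ℕ → V) (hadj : ∀ i, G.Adj (f i) (f (i + 1))) (j d : ℕ) :
    (walkSeg (G := G) f hadj j d).support
      = (List.range (d + 1)).map (fun k => f (j + d - k)) := by
  induction d with
  | zero => simp [walkSeg, List.range_succ]
  | succ d ih =>
    have hr : List.range (d + 1 + 1) = 0 :: (List.range (d + 1)).map Nat.succ :=
      List.range_succ_eq_map
    have hmap : List.map ((fun k => f (j + (d + 1) - k)) ∘ Nat.succ) (List.range (d + 1))
        = List.map (fun k => f (j + d - k)) (List.range (d + 1)) := by
      refine List.map_congr_left fun a ha => ?_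
      simp only [Function.comp_apply]
      congr 1
      omega
    rw [walkSeg, SimpleGraph.Walk.support_cons, ih, hr, List.map_cons, List.map_map, hmap]
    simp

lemma walkSeg_edges (f : ℕ → V) (hadj : ∀ i, G.Adj (f i) (f (i + 1))) (j d : ℕ) :
    (walkSeg (G := G) f hadj j d).edges
      = (List.range d).map (fun k => s(f (j + d - k), f (j + d - k - 1))) := by
  induction d with
  | zero => simp [walkSeg]
  | succ d ih =>
    have hr : List.range (d + 1) = 0 :: (List.range d).map Nat.succ :=
      List.range_succ_eq_map
    have hmap : List.map ((fun k => s(f (j + (d + 1) - k), f (j + (d + 1) - k - 1))) ∘ Nat.succ)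
          (List.range d)
        = List.map (fun k => s(f (j + d - k), f (j + d - k - 1))) (List.range d) := by
      refine List.map_congr_left fun a ha => ?_
      simp only [Function.comp_apply]
      rw [Sym2.eq_iff]
      left
      constructor <;> (congr 1; omega)
    rw [walkSeg, SimpleGraph.Walk.edges_cons, ih, hr, List.map_cons, List.map_map, hmap]
    have h0 : j + (d + 1) - 0 - 1 = j + d := by omega
    simp [h0]

/-- A non-backtracking sequence in an acyclic graph is injective. -/
lemma nonbacktrack_inj (hac : G.IsAcyclic) (f : ℕ → V)
    (hadj : ∀ i, G.Adj (f i) (f (i + 1))) (hnb : ∀ i, f (i + 2) ≠ f i) :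
    Function.Injective f := by
  suffices H : ∀ n, ∀ i ≤ n, ∀ j ≤ n, f i = f j → i = j by
    intro i j h
    exact H (max i j) i (le_max_left _ _) j (le_max_right _ _) h
  intro n
  induction n with
  | zero => intro i hi j hj _; omega
  | succ n IH =>
    have key : ∀ j ≤ n, f (n + 1) = f j → False := by
      intro j hj heq
      by_cases hjn : j = n
      · subst hjn
        exact (hadj j).ne heq.symm
      by_cases hjn1 : j + 1 = n
      · exact hnb j (by rw [show j + 2 = n + 1 by omega]; exact heq)
      have hj2 : j + 2 ≤ n := by omega
      obtain ⟨d, rfl⟩ : ∃ d, n = j + d := ⟨n - j, by omega⟩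
      have hd2 : 2 ≤ d := by omega
      set p := walkSeg (G := G) f hadj j d with hp_def
      have hp : p.IsPath := by
        rw [SimpleGraph.Walk.isPath_def, hp_def, walkSeg_support]
        refine List.Nodup.map_on ?_ List.nodup_range
        intro k hk k' hk' hkk
        rw [List.mem_range] at hk hk'
        have := IH (j + d - k) (by omega) (j + d - k') (by omega) hkk
        omega
      have hadj' : G.Adj (f j) (f (j + d)) := by
        have h := hadj (j + d)
        rw [heq] at h
        exact h.symm
      have hcyc : (SimpleGraph.Walk.cons hadj' p).IsCycle := by
        rw [SimpleGraph.Walk.cons_isCycle_iff]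
        refine ⟨hp, fun hmem => ?_⟩
        rw [hp_def, walkSeg_edges] at hmem
        simp only [List.mem_map, List.mem_range] at hmem
        obtain ⟨k, hk, hke⟩ := hmem
        rw [Sym2.eq_iff] at hke
        rcases hke with ⟨e1, e2⟩ | ⟨e1, e2⟩
        · have := IH (j + d - k) (by omega) j (by omega) e1
          have := IH (j + d - k - 1) (by omega) (j + d) (by omega) e2
          omega
        · have := IH (j + d - k) (by omega) (j + d) (by omega) e1
          have := IH (j + d - k - 1) (by omega) j (by omega) e2
          omega
      exact hac _ hcyc
    intro i hi j hj hf
    by_cases hi' : i ≤ n <;> by_cases hj' : j ≤ n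
    · exact IH i hi' j hj' hf
    · have hj'' : j = n + 1 := by omega
      subst hj''
      exact absurd hf.symm (fun h => key i hi' h)
    · have hi'' : i = n + 1 := by omega
      subst hi''
      exact absurd hf (fun h => key j hj' h)
    · omega

lemma IsGraphAut.pow {σ : Equiv.Perm V} (h : IsGraphAut G σ) (k : ℕ) :
    IsGraphAut G (σ ^ k) := by
  induction k with
  | zero => intro u v; simp [IsGraphAut]
  | succ k ih =>
    intro u v
    rw [h u v, ih (σ u) (σ v)]
    simp [pow_succ, Equiv.Perm.mul_apply]

/-- An automorphism of odd order of a finite tree has a fixed vertex. -/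
lemma exists_fixed [Fintype V] (ht : G.IsTree) {σ : Equiv.Perm V}
    (haut : IsGraphAut G σ) (hodd : Odd (orderOf σ)) : ∃ v, σ v = v := by
  by_contra hfix
  push_neg at hfix
  set g : V → V := fun x => tnxt ht x (σ x) with hg_def
  have hg : ∀ x, G.Adj x (g x) := fun x => tnxt_adj ht (fun h => hfix x h.symm)
  have hno2 : ∀ x, g (g x) ≠ x := by
    intro x heq
    have hcd : G.Adj (σ x) (σ (g x)) := (haut _ _).mp (hg x)
    obtain ⟨h1, h2⟩ := tcross ht (hfix x) (hfix (g x)) rfl heq hcd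
    -- σ x = g x and σ (g x) = x, hence σ (σ x) = x
    have hsq : σ (σ x) = x := by rw [h1]; exact h2
    obtain ⟨m, hm⟩ := hodd
    have heven : ∀ k : ℕ, (σ ^ (2 * k)) x = x := by
      intro k
      induction k with
      | zero => simp
      | succ k ih =>
        have : 2 * (k + 1) = 2 * k + 2 := by omega
        rw [this, pow_add, Equiv.Perm.mul_apply]
        have : (σ ^ 2) x = x := by rw [pow_two, Equiv.Perm.mul_apply, hsq]
        rw [this, ih]
    have h1' : (σ ^ orderOf σ) x = x := by rw [pow_orderOf_eq_one]; rfl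
    rw [hm, pow_succ', Equiv.Perm.mul_apply, heven m] at h1'
    exact hfix x h1'
  obtain ⟨x₀⟩ : Nonempty V := ht.isConnected.nonempty
  set f : ℕ → V := fun i => g^[i] x₀ with hf_def
  have hadjf : ∀ i, G.Adj (f i) (f (i + 1)) := by
    intro i
    rw [hf_def]
    simp only [Function.iterate_succ_apply']
    exact hg _
  have hnbf : ∀ i, f (i + 2) ≠ f i := by
    intro i
    rw [hf_def]
    simp only [Function.iterate_succ_apply']
    exact hno2 _
  have hinj := nonbacktrack_inj ht.IsAcyclic f hadjf hnbf
  obtain ⟨i, j, hne, hij⟩ := Finite.exists_ne_map_eq_of_infinite f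
  exact hne (hinj hij)

lemma exists_boundary {σ : Equiv.Perm V} (hconn : G.Connected) {v w : V}
    (hv : σ v = v) (hw : σ w ≠ w) :
    ∃ x y, σ x = x ∧ σ y ≠ y ∧ G.Adj x y := by
  suffices H : ∀ (a c : V) (p : G.Walk a c), σ a = a → σ c ≠ c →
      ∃ x y, σ x = x ∧ σ y ≠ y ∧ G.Adj x y by
    obtain ⟨p⟩ := hconn v w
    exact H v w p hv hw
  intro a c p
  induction p with
  | nil => intro h1 h2; exact absurd h1 h2
  | @cons a b c h q ih =>
    intro h1 h2
    by_cases hb : σ b = b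
    · exact ih hb h2
    · exact ⟨a, b, h1, hb, h⟩

end TreeAux


/-- An involution-free finite tree has trivial automorphism group. -/
theorem stmt13 {V : Type} [Fintype V] (G : SimpleGraph V) (htree : G.IsTree)
    (hinv : ¬∃ σ : Equiv.Perm V, IsGraphAut G σ ∧ orderOf σ = 2) :
    ∀ σ : Equiv.Perm V, IsGraphAut G σ → σ = 1 := by
  intro σ haut
  by_contra hne
  classical
  haveI : Finite (Equiv.Perm V) :=
    Finite.of_injective (fun τ : Equiv.Perm V => (τ : V → V))
      (fun _ _ h => Equiv.coe_fn_injective h)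
  have hpos : 0 < orderOf σ := orderOf_pos σ
  by_cases heven : Even (orderOf σ)
  · -- take the half power, an involution
    obtain ⟨k, hk⟩ := heven
    have hk' : orderOf σ = 2 * k := by omega
    have hkpos : 0 < k := by omega
    have hgcd : Nat.gcd (orderOf σ) k = k := Nat.gcd_eq_right ⟨2, by omega⟩
    have horder : orderOf (σ ^ k) = 2 := by
      rw [orderOf_pow' σ (by omega : k ≠ 0), hgcd, hk']
      rw [Nat.mul_comm]
      exact Nat.mul_div_cancel_left 2 hkpos
    exact hinv ⟨σ ^ k, haut.pow k, horder⟩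
  · have hodd : Odd (orderOf σ) := Nat.odd_iff.mpr (Nat.not_even_iff.mp heven)
    obtain ⟨v₀, hv₀⟩ := exists_fixed htree haut hodd
    obtain ⟨w, hw⟩ : ∃ w, σ w ≠ w := by
      by_contra hall
      push_neg at hall
      exact hne (Equiv.ext hall)
    obtain ⟨v, u, hv, hu, hadj_vu⟩ := exists_boundary htree.isConnected hv₀ hw
    set u' := σ u with hu'_def
    have hu'ne : u' ≠ u := hu
    have hadj_vu' : G.Adj v u' := by
      have := (haut v u).mp hadj_vu
      rwa [hv] at this
    set b : V → V := fun x => tnxt htree v x with hb_def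
    have hbσ : ∀ x, b (σ x) = σ (b x) := by
      intro x
      have := tnxt_map htree haut v x
      rwa [hv] at this
    have hbinv : ∀ x, b (σ⁻¹ x) = σ⁻¹ (b x) := by
      intro x
      have h := hbσ (σ⁻¹ x)
      rw [Equiv.Perm.apply_inv_self] at h
      rw [h, Equiv.Perm.inv_apply_self]
    have hσnev : ∀ x, x ≠ v → σ x ≠ v := by
      intro x hx h
      exact hx (σ.injective (by rw [h, hv]))
    have hσinv_nev : ∀ x, x ≠ v → σ⁻¹ x ≠ v := by
      intro x hx h
      apply hx
      rw [← Equiv.Perm.apply_inv_self σ x, h, hv]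
    set τf : V → V := fun x =>
      if x ≠ v ∧ b x = u then σ x else if x ≠ v ∧ b x = u' then σ⁻¹ x else x with hτf_def
    have hτf_eval1 : ∀ x, x ≠ v → b x = u → τf x = σ x := by
      intro x h1 h2; rw [hτf_def]; simp only; rw [if_pos ⟨h1, h2⟩]
    have hτf_eval2 : ∀ x, x ≠ v → b x = u' → τf x = σ⁻¹ x := by
      intro x h1 h2
      rw [hτf_def]; simp only
      rw [if_neg (fun hc => hu'ne (h2.symm.trans hc.2)), if_pos ⟨h1, h2⟩]
    have hτf_eval3 : ∀ x, ¬(x ≠ v ∧ b x = u) → ¬(x ≠ v ∧ b x = u') → τf x = x := by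
      intro x h1 h2; rw [hτf_def]; simp only; rw [if_neg h1, if_neg h2]
    have hinvol : Function.Involutive τf := by
      intro x
      by_cases c1 : x ≠ v ∧ b x = u
      · rw [hτf_eval1 x c1.1 c1.2]
        have hbx : b (σ x) = u' := by rw [hbσ, c1.2]
        rw [hτf_eval2 (σ x) (hσnev x c1.1) hbx, Equiv.Perm.inv_apply_self]
      by_cases c2 : x ≠ v ∧ b x = u'
      · rw [hτf_eval2 x c2.1 c2.2]
        have hbx : b (σ⁻¹ x) = u := by
          rw [hbinv, c2.2, hu'_def, Equiv.Perm.inv_apply_self]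
        rw [hτf_eval1 (σ⁻¹ x) (hσinv_nev x c2.1) hbx, Equiv.Perm.apply_inv_self]
      · rw [hτf_eval3 x c1 c2, hτf_eval3 x c1 c2]
    have hone : ∀ x y, G.Adj x y → G.Adj (τf x) (τf y) := by
      have hτfv : τf v = v := hτf_eval3 v (fun h => h.1 rfl) (fun h => h.1 rfl)
      have haux : ∀ y, G.Adj v y → G.Adj v (τf y) := by
        intro y hy
        have hyv : y ≠ v := hy.ne'
        have hby : b y = y := tnxt_of_adj htree hy
        by_cases h1 : y = u
        · rw [hτf_eval1 y hyv (by rw [hby, h1])]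
          rw [h1]
          exact hadj_vu'
        by_cases h2 : y = u'
        · rw [hτf_eval2 y hyv (by rw [hby, h2])]
          rw [h2, hu'_def, Equiv.Perm.inv_apply_self]
          exact hadj_vu
        · rw [hτf_eval3 y (fun hc => h1 (hby.symm.trans hc.2)) (fun hc => h2 (hby.symm.trans hc.2))]
          exact hy
      intro x y hxy
      by_cases hx : x = v
      · subst hx
        rw [hτfv]
        exact haux y hxy
      by_cases hy : y = v
      · subst hy
        rw [hτfv]
        exact (haux x hxy.symm).symm
      · have hbxy : b x = b y := tnxt_adj_eq htree hx hy hxy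
        by_cases h1 : b x = u
        · rw [hτf_eval1 x hx h1, hτf_eval1 y hy (hbxy ▸ h1)]
          exact (haut x y).mp hxy
        by_cases h2 : b x = u'
        · rw [hτf_eval2 x hx h2, hτf_eval2 y hy (hbxy ▸ h2)]
          have := (haut (σ⁻¹ x) (σ⁻¹ y)).mpr
          simp only [Equiv.Perm.apply_inv_self] at this
          exact this hxy
        · rw [hτf_eval3 x (fun hc => h1 hc.2) (fun hc => h2 hc.2),
            hτf_eval3 y (fun hc => h1 (hbxy ▸ hc.2)) (fun hc => h2 (hbxy ▸ hc.2))]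
          exact hxy
    set τ : Equiv.Perm V := hinvol.toPerm τf with hτ_def
    have hτ_apply : ∀ x, τ x = τf x := fun x => rfl
    have hτaut : IsGraphAut G τ := by
      intro x y
      constructor
      · intro h
        rw [hτ_apply, hτ_apply]
        exact hone x y h
      · intro h
        have := hone (τf x) (τf y) (by rwa [hτ_apply, hτ_apply] at h)
        rwa [hinvol x, hinvol y] at this
    have hτne : τ ≠ 1 := by
      intro h
      have huv : u ≠ v := hadj_vu.ne'
      have hbu : b u = u := tnxt_of_adj htree hadj_vu
      have : τ u = σ u := hτf_eval1 u huv hbu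
      rw [h] at this
      exact hu (by simpa using this.symm)
    have hτ2 : τ ^ 2 = 1 := by
      ext x
      rw [pow_two]
      simp only [Equiv.Perm.mul_apply, Equiv.Perm.one_apply]
      rw [hτ_apply, hτ_apply]
      exact hinvol x
    exact hinv ⟨τ, hτaut, orderOf_eq_prime hτ2 hτne⟩
end

section
/- In a tree, the number of walks of length ℓ from a vertex e to a vertex o at distance ℓ−2 from e equals the number of edges incident to at least one vertex of the path from o to e; in particular, if the path from o to e consists of a sequence of vertices all of odd degree except for even-degree e, this number of walks is even. -/
open SimpleGraph Finset

variable {V : Type} [Fintype V] [DecidableEq V] {G : SimpleGraph V} [DecidableRel G.Adj]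

/-- If `e—v` starts a path and `u ≠ v` is another neighbor of `e`, then `u` is not on the
rest of the path (else the tree would have two distinct paths from `e` to `u`). -/
private lemma aux_not_mem (hac : G.IsAcyclic) {e v o u : V} (h : G.Adj e v)
    (q : G.Walk v o) (hq : q.IsPath) (he : e ∉ q.support)
    (hu : G.Adj e u) (huv : u ≠ v) : u ∉ q.support := by
  intro hmem
  have ht : (Walk.cons h (q.takeUntil u hmem)).IsPath := by
    rw [Walk.cons_isPath_iff]
    exact ⟨hq.takeUntil hmem, fun hc => he (q.support_takeUntil_subset hmem hc)⟩
  have h2 : (Walk.cons hu Walk.nil).IsPath := by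
    rw [Walk.cons_isPath_iff]
    simp [G.ne_of_adj hu]
  have hpq := hac.path_unique ⟨Walk.cons h (q.takeUntil u hmem), ht⟩ ⟨Walk.cons hu Walk.nil, h2⟩
  have hsup := congrArg (fun p : G.Path e u => (p : G.Walk e u).support) hpq
  simp only [Walk.support_cons, Walk.support_nil] at hsup
  rw [(q.takeUntil u hmem).support_eq_cons] at hsup
  simp only [List.cons.injEq] at hsup
  exact huv hsup.2.1.symm

private lemma tree_dist_eq (ht : G.IsTree) {a b : V} (q : G.Walk a b) (hq : q.IsPath) :
    G.dist a b = q.length := by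
  obtain ⟨r, hr, hrl⟩ := ht.isConnected.exists_path_of_dist a b
  have := ht.IsAcyclic.path_unique ⟨q, hq⟩ ⟨r, hr⟩
  have hq : q = r := congrArg Subtype.val this
  rw [hq, hrl]

private lemma card_walkLength_dist (ht : G.IsTree) {u o : V} {n : ℕ}
    (hd : G.dist u o = n) :
    (G.finsetWalkLength n u o).card = 1 := by
  obtain ⟨r, hr, hrl⟩ := ht.isConnected.exists_path_of_dist u o
  rw [Finset.card_eq_one]
  refine ⟨r, ?_⟩
  ext w
  simp only [Finset.mem_singleton, SimpleGraph.mem_finsetWalkLength_iff]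
  constructor
  · intro hw
    have hwp := w.isPath_of_length_eq_dist (by rw [hw, hd])
    exact congrArg Subtype.val (ht.IsAcyclic.path_unique ⟨w, hwp⟩ ⟨r, hr⟩)
  · rintro rfl; rw [hrl, hd]

private lemma card_walkLength_succ (e o : V) (n : ℕ) :
    (G.finsetWalkLength (n + 1) e o).card =
      ∑ u : G.neighborSet e, (G.finsetWalkLength n u o).card := by
  have hdef : G.finsetWalkLength (n + 1) e o =
      Finset.univ.biUnion fun (w : G.neighborSet e) =>
        (G.finsetWalkLength n w o).map
          ⟨fun p => Walk.cons w.property p, fun _ _ h => by injection h⟩ := rfl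
  rw [hdef, Finset.card_biUnion]
  · simp
  · intro u _ u' _ hne
    simp only [Finset.disjoint_left]
    intro w hw hw'
    simp only [Finset.mem_map, Function.Embedding.coeFn_mk] at hw hw'
    obtain ⟨p, _, rfl⟩ := hw
    obtain ⟨p', _, hpe⟩ := hw'
    apply hne
    have hsup := congrArg Walk.support hpe
    change (Walk.cons ((G.mem_neighborSet e u').mp u'.2) p').support =
      (Walk.cons ((G.mem_neighborSet e u).mp u.2) p).support at hsup
    simp only [Walk.support_cons] at hsup
    rw [p.support_eq_cons, p'.support_eq_cons] at hsup
    simp only [List.cons.injEq] at hsup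
    exact Subtype.ext hsup.2.1.symm

private lemma E_nil (e : V) :
    {ed : Sym2 V | ed ∈ G.edgeSet ∧ ∃ w ∈ (Walk.nil : G.Walk e e).support, w ∈ ed}.ncard
      = G.degree e := by
  have hs : {ed : Sym2 V | ed ∈ G.edgeSet ∧ ∃ w ∈ (Walk.nil : G.Walk e e).support, w ∈ ed}
      = G.incidenceSet e := by
    ext ed
    simp [SimpleGraph.incidenceSet]
  rw [hs, ← Nat.card_coe_set_eq, Nat.card_eq_fintype_card,
    G.card_incidenceSet_eq_degree]

private lemma E_cons (ht : G.IsTree) {e v o : V} (h : G.Adj e v) (q : G.Walk v o)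
    (hq : q.IsPath) (he : e ∉ q.support) :
    {ed : Sym2 V | ed ∈ G.edgeSet ∧ ∃ w ∈ (Walk.cons h q).support, w ∈ ed}.ncard + 1 =
      {ed : Sym2 V | ed ∈ G.edgeSet ∧ ∃ w ∈ q.support, w ∈ ed}.ncard + G.degree e := by
  set A := {ed : Sym2 V | ed ∈ G.edgeSet ∧ ∃ w ∈ q.support, w ∈ ed} with hA
  have hU : {ed : Sym2 V | ed ∈ G.edgeSet ∧ ∃ w ∈ (Walk.cons h q).support, w ∈ ed}
      = A ∪ G.incidenceSet e := by
    ext ed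
    simp only [Walk.support_cons, List.mem_cons, hA, Set.mem_setOf_eq, Set.mem_union,
      SimpleGraph.incidenceSet, Set.mem_sep_iff, SimpleGraph.mem_edgeSet]
    constructor
    · rintro ⟨h1, w, (rfl | hw), h2⟩
      · exact Or.inr ⟨h1, h2⟩
      · exact Or.inl ⟨h1, w, hw, h2⟩
    · rintro (⟨h1, w, hw, h2⟩ | ⟨h1, h2⟩)
      · exact ⟨h1, w, Or.inr hw, h2⟩
      · exact ⟨h1, e, Or.inl rfl, h2⟩
  have hI : A ∩ G.incidenceSet e = {s(e, v)} := by
    ext ed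
    simp only [hA, Set.mem_inter_iff, Set.mem_setOf_eq, SimpleGraph.incidenceSet,
      Set.mem_sep_iff, SimpleGraph.mem_edgeSet, Set.mem_singleton_iff]
    constructor
    · rintro ⟨⟨hed, w, hw, hwed⟩, -, heed⟩
      obtain ⟨u, rfl⟩ := Sym2.mem_iff_exists.mp heed
      have hadj : G.Adj e u := hed
      rcases Sym2.mem_iff.mp hwed with rfl | rfl
      · exact absurd hw he
      · by_cases huv : w = v
        · rw [huv]
        · exact absurd hw (aux_not_mem ht.IsAcyclic h q hq he hadj huv)
    · rintro rfl
      exact ⟨⟨h, v, q.start_mem_support, Sym2.mem_mk_right e v⟩, h, Sym2.mem_mk_left e v⟩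
  have hie := Set.ncard_union_add_ncard_inter A (G.incidenceSet e)
  rw [hI, Set.ncard_singleton] at hie
  have hdeg : (G.incidenceSet e).ncard = G.degree e := by
    rw [← Nat.card_coe_set_eq, Nat.card_eq_fintype_card, G.card_incidenceSet_eq_degree]
  rw [hU]
  omega

private lemma main_count (ht : G.IsTree) : ∀ {e o : V} (q : G.Walk e o), q.IsPath →
    (G.finsetWalkLength (q.length + 2) e o).card =
      {ed : Sym2 V | ed ∈ G.edgeSet ∧ ∃ w ∈ q.support, w ∈ ed}.ncard := by
  intro e o q
  induction q with
  | nil =>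
    rename_i a
    intro _
    rw [show (Walk.nil : G.Walk a a).length + 2 = 1 + 1 from rfl, card_walkLength_succ a a 1,
      E_nil a]
    have h1 : ∀ u : G.neighborSet a, (G.finsetWalkLength 1 (u : V) a).card = 1 := by
      intro u
      exact card_walkLength_dist ht (dist_eq_one_iff_adj.mpr u.2.symm)
    rw [Finset.sum_congr rfl fun u _ => h1 u]
    simp [G.card_neighborSet_eq_degree]
  | cons h q ih =>
    rename_i e' v o'
    intro hp
    rw [Walk.cons_isPath_iff] at hp
    obtain ⟨hq, he⟩ := hp
    have hpc : (Walk.cons h q).IsPath := (Walk.cons_isPath_iff h q).mpr ⟨hq, he⟩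
    rw [show (Walk.cons h q).length + 2 = (q.length + 2) + 1 from rfl, card_walkLength_succ]
    set v₀ : G.neighborSet e' := ⟨v, h⟩ with hv₀
    rw [← Finset.add_sum_erase _ _ (Finset.mem_univ v₀)]
    have hone : ∀ u ∈ Finset.univ.erase v₀,
        (G.finsetWalkLength (q.length + 2) (u : V) o').card = 1 := by
      intro u hu
      have huv : (u : V) ≠ v := fun hc => (Finset.mem_erase.mp hu).1 (Subtype.ext hc)
      have hnm : (u : V) ∉ (Walk.cons h q).support := by
        rw [Walk.support_cons]
        simp only [List.mem_cons, not_or]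
        exact ⟨G.ne_of_adj u.2.symm, aux_not_mem ht.IsAcyclic h q hq he u.2 huv⟩
      have hpath : (Walk.cons u.2.symm (Walk.cons h q)).IsPath :=
        (Walk.cons_isPath_iff _ _).mpr ⟨hpc, hnm⟩
      exact card_walkLength_dist ht
        ((tree_dist_eq ht _ hpath).trans (by simp [Walk.length_cons]))
    rw [Finset.sum_congr rfl hone, Finset.sum_const, smul_eq_mul, mul_one,
      Finset.card_erase_of_mem (Finset.mem_univ v₀), Finset.card_univ]
    have hcard : Fintype.card (G.neighborSet e') = G.degree e' :=
      G.card_neighborSet_eq_degree e'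
    have hdegpos : 1 ≤ G.degree e' := by
      rw [← hcard]
      exact Fintype.card_pos_iff.mpr ⟨v₀⟩
    have hb : (G.finsetWalkLength (q.length + 2) (v₀ : V) o').card =
        {ed : Sym2 V | ed ∈ G.edgeSet ∧ ∃ w ∈ q.support, w ∈ ed}.ncard := ih hq
    have hE := E_cons ht h q hq he
    omega

private lemma sum_formula (ht : G.IsTree) : ∀ {e o : V} (q : G.Walk e o), q.IsPath →
    {ed : Sym2 V | ed ∈ G.edgeSet ∧ ∃ w ∈ q.support, w ∈ ed}.ncard + q.length
      = (q.support.map (fun v => G.degree v)).sum := by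
  intro e o q
  induction q with
  | nil =>
    rename_i a
    intro _
    rw [show (Walk.nil : G.Walk a a).length = 0 from rfl, E_nil a]
    simp
  | cons h q ih =>
    intro hp
    rw [Walk.cons_isPath_iff] at hp
    obtain ⟨hq, he⟩ := hp
    have hIH := ih hq
    have hE := E_cons ht h q hq he
    simp only [Walk.support_cons, List.map_cons, List.sum_cons, Walk.length_cons] at hE ⊢
    omega

/-- In a tree, the number of walks of length ℓ from e to o, where o is at distance
ℓ - 2 from e, equals the number of edges incident to at least one vertex of the
path from o to e; in particular, if all vertices of that path except e have odd
degree and e has even degree, then this number of walks is even. -/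
theorem stmt16 {V : Type} [Fintype V] [DecidableEq V] (G : SimpleGraph V)
    [DecidableRel G.Adj] (htree : G.IsTree) (e o : V) (ℓ : ℕ)
    (p : G.Walk o e) (hp : p.IsPath) (hlen : p.length + 2 = ℓ) :
    Nat.card {w : G.Walk e o // w.length = ℓ} =
      Nat.card {ed : Sym2 V // ed ∈ G.edgeSet ∧ ∃ v ∈ p.support, v ∈ ed} ∧
    ((∀ v ∈ p.support, v ≠ e → Odd (G.degree v)) → Even (G.degree e) →
      Even (Nat.card {w : G.Walk e o // w.length = ℓ})) := by
  subst hlen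
  have hrev : (p.reverse).IsPath := hp.reverse
  have hsupp : {ed : Sym2 V | ed ∈ G.edgeSet ∧ ∃ w ∈ p.reverse.support, w ∈ ed}
      = {ed : Sym2 V | ed ∈ G.edgeSet ∧ ∃ v ∈ p.support, v ∈ ed} := by
    ext ed
    simp [Walk.support_reverse]
  have h3 : Nat.card {ed : Sym2 V // ed ∈ G.edgeSet ∧ ∃ v ∈ p.support, v ∈ ed}
      = {ed : Sym2 V | ed ∈ G.edgeSet ∧ ∃ v ∈ p.support, v ∈ ed}.ncard :=
    Nat.card_coe_set_eq _
  have hmain : Nat.card {w : G.Walk e o // w.length = p.length + 2} =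
      Nat.card {ed : Sym2 V // ed ∈ G.edgeSet ∧ ∃ v ∈ p.support, v ∈ ed} := by
    have h1 : Nat.card {w : G.Walk e o // w.length = p.length + 2} =
        (G.finsetWalkLength (p.length + 2) e o).card := by
      rw [Nat.card_eq_fintype_card]
      exact G.card_set_walk_length_eq e o (p.length + 2)
    have h2 := main_count htree p.reverse hrev
    rw [Walk.length_reverse, hsupp] at h2
    rw [h1, h2, h3]
  refine ⟨hmain, fun hodd heven => ?_⟩
  rw [hmain, h3]
  have hsum := sum_formula htree p hp
  have hnd : p.support.Nodup := hp.support_nodup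
  have hfin : (p.support.map (fun v => G.degree v)).sum = ∑ v ∈ p.support.toFinset, G.degree v :=
    (List.sum_toFinset _ hnd).symm
  have hemem : e ∈ p.support.toFinset := List.mem_toFinset.mpr p.end_mem_support
  have hsplit : ∑ v ∈ p.support.toFinset, G.degree v
      = G.degree e + ∑ v ∈ p.support.toFinset.erase e, G.degree v :=
    (Finset.add_sum_erase _ _ hemem).symm
  have hcard : (p.support.toFinset.erase e).card = p.length := by
    rw [Finset.card_erase_of_mem hemem, List.toFinset_card_of_nodup hnd, Walk.length_support]
    omega
  have hS : Even (∑ v ∈ p.support.toFinset.erase e, G.degree v) ↔ Even p.length := by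
    rw [Finset.even_sum_iff_even_card_odd]
    rw [Finset.filter_true_of_mem, hcard]
    intro v hv
    obtain ⟨hvne, hvmem⟩ := Finset.mem_erase.mp hv
    exact hodd v (List.mem_toFinset.mp hvmem) hvne
  obtain ⟨c, hc⟩ := heven
  have key : {ed : Sym2 V | ed ∈ G.edgeSet ∧ ∃ v ∈ p.support, v ∈ ed}.ncard + p.length
      = G.degree e + ∑ v ∈ p.support.toFinset.erase e, G.degree v := by
    rw [hsum, hfin, hsplit]
  rcases Nat.even_or_odd p.length with hL | hL
  · obtain ⟨a, ha⟩ := hL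
    obtain ⟨b, hb⟩ := hS.mpr ⟨a, ha⟩
    exact ⟨c + b - a, by omega⟩
  · obtain ⟨a, ha⟩ := hL
    have : ¬ Even (∑ v ∈ p.support.toFinset.erase e, G.degree v) := by
      rw [hS]
      exact Nat.not_even_iff_odd.mpr ⟨a, ha⟩
    obtain ⟨b, hb⟩ := Nat.not_even_iff_odd.mp this
    exact ⟨c + b - a, by omega⟩
end
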